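/- arXiv:1004.2104 — 11 statements merged into one kernel-verified Lean document; each statement's English description precedes it below -/
import Mathlib

section
/- Let K ≥ 1 and let a_1, …, a_K and b_1, …, b_K be arbitrary real numbers, with the convention a_0 = 0. For 1 ≤ i ≤ K set S_i = Σ_{j=i}^K b_j² (and S_{K+1} = 0). Then Σ_{i=1}^K (1/2)·log(1 + a_i²·b_i² / (a_i²·S_{i+1} + 1)) = (1/2)·Σ_{i=1}^K log(1 + (a_i² − a_{i-1}²)·S_i / (a_{i-1}²·S_i + 1)). (All arguments of the logarithms are ≥ 1, since each factor has the form (a²·s + 1)/(a'²·s + 1) with s a sum of squares.) -/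
open Finset

/-- Telescoping identity for the SIC sum rate of the K-user Gaussian degraded
interference channel: with `a 0 = 0` and `S i = ∑_{j=i}^K b j ^ 2`,
`∑_{i=1}^K (1/2) log (1 + a_i² b_i² / (a_i² S_{i+1} + 1))
  = (1/2) ∑_{i=1}^K log (1 + (a_i² - a_{i-1}²) S_i / (a_{i-1}² S_i + 1))`. -/
theorem sic_sum_rate_telescoping (K : ℕ) (hK : 1 ≤ K) (a b : ℕ → ℝ) (ha0 : a 0 = 0) :
    ∑ i ∈ Finset.Icc 1 K, (1 / 2 : ℝ) *
        Real.log (1 + a i ^ 2 * b i ^ 2 /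
          (a i ^ 2 * (∑ j ∈ Finset.Icc (i + 1) K, b j ^ 2) + 1)) =
      (1 / 2 : ℝ) * ∑ i ∈ Finset.Icc 1 K,
        Real.log (1 + (a i ^ 2 - a (i - 1) ^ 2) * (∑ j ∈ Finset.Icc i K, b j ^ 2) /
          (a (i - 1) ^ 2 * (∑ j ∈ Finset.Icc i K, b j ^ 2) + 1)) := by
  set S : ℕ → ℝ := fun i => ∑ j ∈ Finset.Icc i K, b j ^ 2 with hS
  have hSnn : ∀ i, 0 ≤ S i := fun i => Finset.sum_nonneg fun j _ => sq_nonneg _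
  have hpos : ∀ (c : ℝ) (i : ℕ), 0 < c ^ 2 * S i + 1 := fun c i => by
    nlinarith [hSnn i, sq_nonneg c, mul_nonneg (sq_nonneg c) (hSnn i)]
  have hSstep : ∀ i, i ≤ K → S i = b i ^ 2 + S (i + 1) := by
    intro i hi
    simp only [hS]
    rw [Finset.Icc_eq_cons_Ioc hi, Finset.sum_cons, ← Finset.Icc_add_one_left_eq_Ioc]
  -- rewrite LHS summands
  have hL : ∀ i ∈ Finset.Icc 1 K,
      (1 / 2 : ℝ) * Real.log (1 + a i ^ 2 * b i ^ 2 / (a i ^ 2 * S (i + 1) + 1)) =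
      (1 / 2 : ℝ) * (Real.log (a i ^ 2 * S i + 1) - Real.log (a i ^ 2 * S (i + 1) + 1)) := by
    intro i hi
    simp only [Finset.mem_Icc] at hi
    have hd := hpos (a i) (i + 1)
    have hn := hpos (a i) i
    rw [hSstep i hi.2]
    congr 1
    rw [← Real.log_div (by nlinarith) (by nlinarith)]
    congr 1
    field_simp
    ring
  have hR : ∀ i ∈ Finset.Icc 1 K,
      Real.log (1 + (a i ^ 2 - a (i - 1) ^ 2) * S i / (a (i - 1) ^ 2 * S i + 1)) =
      Real.log (a i ^ 2 * S i + 1) - Real.log (a (i - 1) ^ 2 * S i + 1) := by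
    intro i hi
    have hd := hpos (a (i - 1)) i
    have hn := hpos (a i) i
    rw [← Real.log_div (by nlinarith) (by nlinarith)]
    congr 1
    field_simp
    ring
  rw [Finset.sum_congr rfl hL, Finset.sum_congr rfl hR, ← Finset.mul_sum]
  congr 1
  rw [Finset.sum_sub_distrib, Finset.sum_sub_distrib]
  congr 1
  -- shift sums: both reduce to range K sums
  have e1 : ∀ n : ℕ, Finset.Icc 1 n = Finset.Ico 1 (n + 1) := fun n => by
    rw [Finset.Ico_add_one_right_eq_Icc]
  rw [e1, Finset.sum_Ico_eq_sum_range, Finset.sum_Ico_eq_sum_range]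
  simp only [Nat.add_sub_cancel]
  have key : ∀ i : ℕ, a (1 + i - 1) ^ 2 * S (1 + i) + 1 = a i ^ 2 * S (i + 1) + 1 := by
    intro i
    have : 1 + i - 1 = i := by omega
    rw [this, Nat.add_comm 1 i]
  simp only [key]
  set F : ℕ → ℝ := fun i => Real.log (a i ^ 2 * S (i + 1) + 1) with hF
  have hF0 : F 0 = 0 := by simp [hF, ha0]
  have hFK : F K = 0 := by
    have : S (K + 1) = 0 := by simp [hS, Finset.Icc_eq_empty_of_lt (Nat.lt_succ_self K)]
    simp [hF, this]
  have h1 : ∑ i ∈ Finset.range K, Real.log (a (1 + i) ^ 2 * S (1 + i + 1) + 1)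
      = ∑ i ∈ Finset.range K, F (i + 1) := by
    apply Finset.sum_congr rfl
    intro i _
    simp [hF, Nat.add_comm 1 i]
  rw [h1]
  show ∑ i ∈ Finset.range K, F (i + 1) = ∑ i ∈ Finset.range K, F i
  have h2 : ∑ i ∈ Finset.range (K + 1), F i = ∑ i ∈ Finset.range K, F (i + 1) + F 0 :=
    Finset.sum_range_succ' F K
  have h3 : ∑ i ∈ Finset.range (K + 1), F i = ∑ i ∈ Finset.range K, F i + F K :=
    Finset.sum_range_succ F K
  rw [hF0] at h2
  rw [hFK] at h3
  linarith
end

section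
/- Let K ≥ 1 and let a_1, …, a_K be real numbers with 0 < a_1 ≤ a_2 ≤ … ≤ a_K, set a_0 = 0 and c_i = √(a_i² − a_{i-1}²), and let b_1, …, b_K be real numbers. Let T be the K×K matrix whose i-th column is t_i, defined by t_0 = 0 and t_i = (a_{i-1}/a_i)·t_{i-1} + (c_i/a_i)·e_i. Let d_{i,j} (1 ≤ i, j ≤ K) be any real numbers with d_{i,j} = 1 whenever i ≤ j, and let G be the K×K matrix with entries g_{i,j} = c_i·b_j·d_{i,j}. Then for all indices with i ≤ j, the (i,j) entry of TᵀG equals a_i·b_j; that is, the upper-triangular part of TᵀG coincides with the upper-triangular part of the rank-one matrix a bᵀ. -/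
open Finset Matrix

/-- The upper-triangular part of `TᵀG` coincides with the upper-triangular part of
the rank-one matrix `a bᵀ`, for the matrices `T` (with columns `t_i`) and
`G = (c_i b_j d_{i,j})` constructed in the genie-MAC outer bound for the degraded
channel, with `d_{i,j} = 1` for `i ≤ j`. -/
theorem genie_TtG_upper_triangular_part (K : ℕ) (hK : 1 ≤ K)
    (a : ℕ → ℝ) (ha0 : a 0 = 0) (hpos : 0 < a 1)
    (hmono : ∀ i ∈ Finset.Ico 1 K, a i ≤ a (i + 1))
    (b : ℕ → ℝ)
    (c : ℕ → ℝ) (hc : ∀ i ∈ Finset.Icc 1 K, c i = Real.sqrt (a i ^ 2 - a (i - 1) ^ 2))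
    (t : ℕ → Fin K → ℝ) (ht0 : t 0 = 0)
    (htrec : ∀ i : Fin K,
      t (i.val + 1) = (a i.val / a (i.val + 1)) • t i.val +
        (c (i.val + 1) / a (i.val + 1)) • (Pi.single i (1:ℝ) : Fin K → ℝ))
    (T : Matrix (Fin K) (Fin K) ℝ) (hT : ∀ i j : Fin K, T i j = t (j.val + 1) i)
    (d : ℕ → ℕ → ℝ) (hd : ∀ i j : ℕ, i ≤ j → d i j = 1)
    (G : Matrix (Fin K) (Fin K) ℝ)
    (hG : ∀ i j : Fin K, G i j = c (i.val + 1) * b (j.val + 1) * d (i.val + 1) (j.val + 1)) :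
    ∀ i j : Fin K, i ≤ j → (Tᵀ * G) i j = a (i.val + 1) * b (j.val + 1) := by
  -- a is positive on [1, K]
  have hapos : ∀ n, 1 ≤ n → n ≤ K → 0 < a n := by
    intro n h1 h2
    induction n with
    | zero => omega
    | succ m ih =>
      rcases Nat.eq_or_lt_of_le h1 with h | h
      · simpa [← h] using hpos
      · have hm1 : 1 ≤ m := by omega
        have := hmono m (by simp [Finset.mem_Ico]; omega)
        exact lt_of_lt_of_le (ih hm1 (by omega)) this
  -- a is monotone step-wise including step 0
  have hstep : ∀ n, n < K → a n ≤ a (n + 1) := by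
    intro n hn
    rcases Nat.eq_zero_or_pos n with h | h
    · subst h; rw [ha0]; exact le_of_lt (hapos 1 le_rfl hK)
    · exact hmono n (by simp [Finset.mem_Ico]; omega)
  have hannn : ∀ n, n ≤ K → 0 ≤ a n := by
    intro n hn
    rcases Nat.eq_zero_or_pos n with h | h
    · simp [h, ha0]
    · exact le_of_lt (hapos n h hn)
  -- support of t n
  have hsupp : ∀ n, n ≤ K → ∀ k : Fin K, n ≤ k.val → t n k = 0 := by
    intro n
    induction n with
    | zero => intro _ k _; simp [ht0]
    | succ m ih =>
      intro hm k hk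
      have hmK : m < K := by omega
      have hrec := htrec ⟨m, hmK⟩
      have : t (m + 1) k = (a m / a (m + 1)) * t m k +
          (c (m + 1) / a (m + 1)) * ((Pi.single (⟨m, hmK⟩ : Fin K) (1:ℝ) : Fin K → ℝ) k) := by
        rw [hrec]; simp [Pi.add_apply, Pi.smul_apply, smul_eq_mul]
      rw [this, ih (by omega) k (by omega),
        Pi.single_eq_of_ne (fun h => by simp [Fin.ext_iff] at h; omega)]
      ring
  -- key sum identity
  have hsum : ∀ n, n ≤ K → ∑ k : Fin K, t n k * c (k.val + 1) = a n := by
    intro n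
    induction n with
    | zero => intro _; simp [ht0, ha0]
    | succ m ih =>
      intro hm
      have hmK : m < K := by omega
      have hrec := htrec ⟨m, hmK⟩
      have expand : ∀ k : Fin K, t (m + 1) k * c (k.val + 1) =
          (a m / a (m + 1)) * (t m k * c (k.val + 1)) +
          (c (m + 1) / a (m + 1)) * ((Pi.single (⟨m, hmK⟩ : Fin K) (1:ℝ) : Fin K → ℝ) k * c (k.val + 1)) := by
        intro k
        rw [hrec]; simp [Pi.add_apply, Pi.smul_apply, smul_eq_mul]; ring
      rw [Finset.sum_congr rfl (fun k _ => expand k), Finset.sum_add_distrib,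
        ← Finset.mul_sum, ← Finset.mul_sum, ih (by omega)]
      have hsingle : ∑ k : Fin K, (Pi.single (⟨m, hmK⟩ : Fin K) (1:ℝ) : Fin K → ℝ) k * c (k.val + 1)
          = c (m + 1) := by
        rw [Finset.sum_eq_single (⟨m, hmK⟩ : Fin K)]
        · simp
        · intro k _ hk; rw [Pi.single_eq_of_ne hk]; ring
        · simp
      rw [hsingle]
      have hc2 : c (m + 1) ^ 2 = a (m + 1) ^ 2 - a m ^ 2 := by
        rw [hc (m + 1) (by simp [Finset.mem_Icc]; omega)]
        simp only [Nat.add_sub_cancel]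
        rw [Real.sq_sqrt]
        nlinarith [hstep m hmK, hannn m (by omega)]
      have hane : a (m + 1) ≠ 0 := ne_of_gt (hapos (m + 1) (by omega) hm)
      field_simp
      nlinarith [hc2]
  -- main computation
  intro i j hij
  have hij' : i.val ≤ j.val := hij
  rw [Matrix.mul_apply]
  have term : ∀ k : Fin K, Tᵀ i k * G k j =
      (t (i.val + 1) k * c (k.val + 1)) * b (j.val + 1) := by
    intro k
    rw [Matrix.transpose_apply, hT, hG]
    rcases le_or_gt (k.val + 1) (i.val + 1) with h | h
    · rw [hd _ _ (by omega)]; ring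
    · rw [hsupp (i.val + 1) (by omega) k (by omega)]; ring
  rw [Finset.sum_congr rfl (fun k _ => term k), ← Finset.sum_mul,
    hsum (i.val + 1) (by omega)]
end

section
/- Let K ≥ 1 and let a_1, …, a_K be real numbers with 0 < a_1 ≤ a_2 ≤ … ≤ a_K, set a_0 = 0 and c_i = √(a_i² − a_{i-1}²), and let b_1, …, b_K be real numbers. Let T be the K×K matrix whose i-th column is t_i, defined by t_0 = 0 and t_i = (a_{i-1}/a_i)·t_{i-1} + (c_i/a_i)·e_i, and let G be the K×K matrix with entries g_{i,j} = c_i·b_j·d_{i,j}, where d_{i,j} are arbitrary real numbers subject to d_{i,j} = 1 for i ≤ j. Then the pair (G, T) is feasible for the genie-MAC optimization problem with H = a bᵀ, P = N = 1: (TᵀG)_{i,j} = a_i·b_j for all i ≤ j, and t_iᵀ t_i ≤ 1 for every i. -/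
open Finset Matrix

/-- The pair `(G, T)` constructed for the degraded channel (with `H = a bᵀ`,
`P = N = 1`) is feasible for the genie-MAC optimization problem:
`(TᵀG)_{i,j} = a_i b_j` for all `i ≤ j`, and each column `t_i` of `T` satisfies
`t_iᵀ t_i ≤ 1`. -/
theorem genie_G_T_feasible (K : ℕ) (hK : 1 ≤ K)
    (a : ℕ → ℝ) (ha0 : a 0 = 0) (hpos : 0 < a 1)
    (hmono : ∀ i ∈ Finset.Ico 1 K, a i ≤ a (i + 1))
    (b : ℕ → ℝ)
    (c : ℕ → ℝ) (hc : ∀ i ∈ Finset.Icc 1 K, c i = Real.sqrt (a i ^ 2 - a (i - 1) ^ 2))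
    (t : ℕ → Fin K → ℝ) (ht0 : t 0 = 0)
    (htrec : ∀ i : Fin K,
      t (i.val + 1) = (a i.val / a (i.val + 1)) • t i.val +
        (c (i.val + 1) / a (i.val + 1)) • (Pi.single i (1:ℝ) : Fin K → ℝ))
    (T : Matrix (Fin K) (Fin K) ℝ) (hT : ∀ i j : Fin K, T i j = t (j.val + 1) i)
    (d : ℕ → ℕ → ℝ) (hd : ∀ i j : ℕ, i ≤ j → d i j = 1)
    (G : Matrix (Fin K) (Fin K) ℝ)
    (hG : ∀ i j : Fin K, G i j = c (i.val + 1) * b (j.val + 1) * d (i.val + 1) (j.val + 1)) :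
    (∀ i j : Fin K, i ≤ j → (Tᵀ * G) i j = a (i.val + 1) * b (j.val + 1)) ∧
      (∀ i : Fin K, (∑ j : Fin K, T j i * T j i) ≤ 1) := by
  -- positivity of a on [1, K]
  have hapos : ∀ n, 1 ≤ n → n ≤ K → 0 < a n := by
    intro n
    induction n with
    | zero => omega
    | succ n ih =>
      intro h1 h2
      rcases Nat.eq_zero_or_pos n with h0 | h0
      · subst h0; simpa using hpos
      · exact lt_of_lt_of_le (ih h0 (by omega))
          (hmono n (Finset.mem_Ico.mpr ⟨h0, by omega⟩))
  have aonneg : ∀ n, n ≤ K → 0 ≤ a n := by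
    intro n hn
    rcases Nat.eq_zero_or_pos n with h0 | h0
    · subst h0; simp [ha0]
    · exact (hapos n h0 hn).le
  have hstep : ∀ n, 1 ≤ n → n ≤ K → a (n - 1) ≤ a n := by
    intro n h1 h2
    rcases Nat.eq_or_lt_of_le h1 with h | h
    · subst h; simp [ha0, hpos.le]
    · have := hmono (n - 1) (Finset.mem_Ico.mpr ⟨by omega, by omega⟩)
      have heq : n - 1 + 1 = n := by omega
      rwa [heq] at this
  have hc2 : ∀ n, 1 ≤ n → n ≤ K → c n ^ 2 = a n ^ 2 - a (n - 1) ^ 2 := by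
    intro n h1 h2
    rw [hc n (Finset.mem_Icc.mpr ⟨h1, h2⟩), Real.sq_sqrt]
    have : a (n - 1) ^ 2 ≤ a n ^ 2 :=
      pow_le_pow_left₀ (aonneg (n - 1) (by omega)) (hstep n h1 h2) 2
    linarith
  -- the key formula for t
  have key : ∀ n, n ≤ K → ∀ k : Fin K,
      t n k = if k.val + 1 ≤ n then c (k.val + 1) / a n else 0 := by
    intro n
    induction n with
    | zero => intro _ k; simp [ht0]
    | succ n ih =>
      intro hn k
      have hrec := congrFun (htrec ⟨n, by omega⟩) k
      simp only [Pi.add_apply, Pi.smul_apply, smul_eq_mul] at hrec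
      rw [hrec, ih (by omega) k, Pi.single_apply]
      by_cases hkn : k = (⟨n, by omega⟩ : Fin K)
      · have hkv : k.val = n := by rw [hkn]
        rw [if_pos hkn, if_neg (by omega), if_pos (by omega), hkv]
        ring
      · have hkv : k.val ≠ n := fun h => hkn (Fin.ext h)
        rw [if_neg hkn]
        by_cases h2 : k.val + 1 ≤ n
        · have hn1 : (0:ℝ) < a n := hapos n (by omega) (by omega)
          rw [if_pos h2, if_pos (by omega), mul_zero, add_zero, div_mul_div_comm,
            mul_comm (a n) (c (k.val + 1)), mul_div_mul_right _ _ hn1.ne']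
        · rw [if_neg h2, if_neg (by omega)]
          ring
  -- telescoping sum of c²
  have sumc : ∀ n, n ≤ K → ∑ m ∈ Finset.range n, c (m + 1) ^ 2 = a n ^ 2 := by
    intro n
    induction n with
    | zero => intro _; simp [ha0]
    | succ n ih =>
      intro hn
      rw [Finset.sum_range_succ, ih (by omega), hc2 (n + 1) (by omega) hn]
      simp
  constructor
  · intro i j hij
    have hi : i.val + 1 ≤ K := i.isLt
    have hij' : i.val ≤ j.val := hij
    have hane : a (i.val + 1) ≠ 0 := (hapos (i.val + 1) (by omega) hi).ne'
    rw [Matrix.mul_apply]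
    have term : ∀ k : Fin K, Tᵀ i k * G k j =
        if k.val + 1 ≤ i.val + 1 then c (k.val + 1) ^ 2 * b (j.val + 1) / a (i.val + 1)
          else 0 := by
      intro k
      rw [Matrix.transpose_apply, hT, hG, key _ hi k]
      by_cases h : k.val + 1 ≤ i.val + 1
      · rw [if_pos h, if_pos h, hd _ _ (by omega)]
        ring
      · rw [if_neg h, if_neg h]
        ring
    rw [Finset.sum_congr rfl fun k _ => term k,
      Fin.sum_univ_eq_sum_range (fun m =>
        if m + 1 ≤ i.val + 1 then c (m + 1) ^ 2 * b (j.val + 1) / a (i.val + 1) else 0) K]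
    rw [← Finset.sum_subset (Finset.range_subset_range.mpr hi)
      (fun m _ hm => by rw [if_neg (by simp at hm ⊢; omega)])]
    rw [Finset.sum_congr rfl fun m hm => if_pos (by simp at hm; omega)]
    rw [← Finset.sum_div, ← Finset.sum_mul, sumc (i.val + 1) hi]
    field_simp
  · intro i
    have hi : i.val + 1 ≤ K := i.isLt
    have hane : a (i.val + 1) ≠ 0 := (hapos (i.val + 1) (by omega) hi).ne'
    have term : ∀ j : Fin K, T j i * T j i =
        if j.val + 1 ≤ i.val + 1 then (c (j.val + 1) / a (i.val + 1)) ^ 2 else 0 := by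
      intro j
      rw [hT, key _ hi j]
      by_cases h : j.val + 1 ≤ i.val + 1
      · rw [if_pos h, if_pos h]; ring
      · rw [if_neg h, if_neg h]; ring
    rw [Finset.sum_congr rfl fun j _ => term j,
      Fin.sum_univ_eq_sum_range (fun m =>
        if m + 1 ≤ i.val + 1 then (c (m + 1) / a (i.val + 1)) ^ 2 else 0) K]
    rw [← Finset.sum_subset (Finset.range_subset_range.mpr hi)
      (fun m _ hm => by rw [if_neg (by simp at hm ⊢; omega)])]
    rw [Finset.sum_congr rfl fun m hm => if_pos (by simp at hm; omega)]
    have : ∑ m ∈ Finset.range (i.val + 1), (c (m + 1) / a (i.val + 1)) ^ 2 =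
        (∑ m ∈ Finset.range (i.val + 1), c (m + 1) ^ 2) / a (i.val + 1) ^ 2 := by
      rw [Finset.sum_div]
      exact Finset.sum_congr rfl fun m _ => by rw [div_pow]
    rw [this, sumc (i.val + 1) hi, div_self (pow_ne_zero 2 hane)]
end

section
/- Let K ≥ 1, let H be a K×K real matrix, and let P > 0 and N > 0 be real. Define f* as the infimum of (1/2)·log det(I + P·Σ⁻¹·G·Gᵀ) over all triples (G, Σ, T) of K×K real matrices such that Σ is symmetric positive definite, (TᵀG)_{i,j} = H_{i,j} for all i ≤ j, and (TᵀΣT)_{i,i} ≤ N for all i. Define g* as the infimum of (1/2)·log det(I + P·G·Gᵀ) over all pairs (G, T) of K×K real matrices such that (TᵀG)_{i,j} = H_{i,j} for all i ≤ j and (TᵀT)_{i,i} ≤ N for all i. Then f* = g*. -/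
open Matrix

/-- Fixing the noise covariance `Σ = I` does not change the optimal value of the
genie-MAC outer-bound optimization problem. -/
theorem genie_opt_sigma_eq_id (K : ℕ) (hK : 1 ≤ K) (H : Matrix (Fin K) (Fin K) ℝ)
    (P N : ℝ) (hP : 0 < P) (hN : 0 < N) :
    sInf {x : ℝ | ∃ G Sg T : Matrix (Fin K) (Fin K) ℝ,
        Sg.PosDef ∧
        (∀ i j : Fin K, i ≤ j → (Tᵀ * G) i j = H i j) ∧
        (∀ i : Fin K, (Tᵀ * Sg * T) i i ≤ N) ∧
        x = (1 / 2) * Real.log ((1 + P • (Sg⁻¹ * G * Gᵀ)).det)} =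
      sInf {x : ℝ | ∃ G T : Matrix (Fin K) (Fin K) ℝ,
        (∀ i j : Fin K, i ≤ j → (Tᵀ * G) i j = H i j) ∧
        (∀ i : Fin K, (Tᵀ * T) i i ≤ N) ∧
        x = (1 / 2) * Real.log ((1 + P • (G * Gᵀ)).det)} := by
  congr 1
  ext x
  simp only [Set.mem_setOf_eq]
  constructor
  · rintro ⟨G, Sg, T, hPD, h1, h2, rfl⟩
    set S := (open scoped MatrixOrder in CFC.sqrt Sg) with hSdef
    have hSS : S * S = Sg := open scoped MatrixOrder in CFC.sqrt_mul_sqrt_self Sg hPD.posSemidef.nonneg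
    have hSsymm : Sᵀ = S := by
      have := (open scoped MatrixOrder in (CFC.sqrt_nonneg Sg).posSemidef).1
      rw [hSdef]
      simpa [Matrix.IsHermitian, Matrix.conjTranspose_eq_transpose_of_trivial] using this
    have hSunit : IsUnit S.det := by
      have hdet : S.det * S.det = Sg.det := by rw [← det_mul, hSS]
      have : Sg.det ≠ 0 := hPD.det_pos.ne'
      exact isUnit_iff_ne_zero.2 (fun h => this (by rw [← hdet, h, mul_zero]))
    refine ⟨S⁻¹ * G, S * T, ?_, ?_, ?_⟩
    · intro i j hij
      have : (S * T)ᵀ * (S⁻¹ * G) = Tᵀ * G := by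
        rw [transpose_mul, hSsymm, Matrix.mul_assoc, ← Matrix.mul_assoc S S⁻¹,
          mul_nonsing_inv _ hSunit, Matrix.one_mul]
      rw [this]; exact h1 i j hij
    · intro i
      have : (S * T)ᵀ * (S * T) = Tᵀ * Sg * T := by
        rw [transpose_mul, hSsymm, Matrix.mul_assoc, ← Matrix.mul_assoc S S T, hSS,
          ← Matrix.mul_assoc]
      rw [this]; exact h2 i
    · have hSinv : (S⁻¹)ᵀ = S⁻¹ := by rw [transpose_nonsing_inv, hSsymm]
      have hSginv : Sg⁻¹ = S⁻¹ * S⁻¹ := by rw [← hSS, Matrix.mul_inv_rev]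
      have hGG : (S⁻¹ * G) * (S⁻¹ * G)ᵀ = S⁻¹ * (G * Gᵀ * S⁻¹) := by
        rw [transpose_mul, hSinv]
        noncomm_ring
      rw [hGG]
      have key : (1 + P • (Sg⁻¹ * G * Gᵀ)).det
          = (1 + P • (S⁻¹ * (G * Gᵀ * S⁻¹))).det := by
        have c1 := Matrix.det_one_add_mul_comm (P • (S⁻¹ * S⁻¹)) (G * Gᵀ)
        have c2 := Matrix.det_one_add_mul_comm (G * Gᵀ * S⁻¹) (P • S⁻¹)
        rw [hSginv]
        simp only [Matrix.smul_mul, Matrix.mul_smul, Matrix.mul_assoc] at c1 c2 ⊢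
        rw [c1, c2]
      rw [key]
  · rintro ⟨G, T, h1, h2, rfl⟩
    refine ⟨G, 1, T, Matrix.PosDef.one, h1, ?_, by simp⟩
    intro i
    simpa [Matrix.mul_one] using h2 i
end

section
/- Let K ≥ 1, let H be a K×K real matrix, and let P > 0 and N > 0 be real. Define f* as the infimum of (1/2)·log det(I + P·Σ⁻¹·G·Gᵀ) over all triples (G, Σ, T) of K×K real matrices with Σ symmetric positive definite, (TᵀG)_{i,j} = H_{i,j} for all i ≤ j, and (TᵀΣT)_{i,i} ≤ N for all i. Define h* as the infimum of (1/2)·log det(I + P·Σ⁻¹·G·Gᵀ) over all pairs (G, Σ) with Σ symmetric positive definite, G_{i,j} = H_{i,j} for all i ≤ j, and Σ_{i,i} ≤ N for all i (i.e., the sub-problem obtained from f* by fixing T = I). Then h* = f*. -/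
open Matrix

section GenieAux
set_option linter.unusedSectionVars false
variable {n : Type*} [Fintype n] [DecidableEq n]

lemma psd_smul {M : Matrix n n ℝ} (hM : M.PosSemidef) {c : ℝ} (hc : 0 ≤ c) :
    (c • M).PosSemidef := by
  refine posSemidef_iff_dotProduct_mulVec.mpr ⟨?_, fun x => ?_⟩
  · simpa [IsHermitian, conjTranspose_smul] using congrArg (c • ·) hM.1.eq
  · rw [smul_mulVec, dotProduct_smul]
    exact mul_nonneg hc (hM.dotProduct_mulVec_nonneg x)

lemma one_le_det_one_add {M : Matrix n n ℝ} (hM : M.PosSemidef) : 1 ≤ (1 + M).det := by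
  have hH := hM.1
  have hspec := hH.spectral_theorem
  set U : Matrix n n ℝ := (hH.eigenvectorUnitary : Matrix n n ℝ) with hU
  set D : Matrix n n ℝ := diagonal (RCLike.ofReal ∘ hH.eigenvalues) with hD
  have hUU : U * star U = 1 := Matrix.mem_unitaryGroup_iff.mp hH.eigenvectorUnitary.2
  have h1 : (1 : Matrix n n ℝ) + M = U * (1 + D) * star U := by
    rw [Unitary.conjStarAlgAut_apply] at hspec
    rw [mul_add, add_mul, mul_one, hUU, ← hspec]
  have hdetU : U.det * (star U).det = 1 := by rw [← det_mul, hUU, det_one]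
  have h2 : ((1 : Matrix n n ℝ) + M).det = ((1 : Matrix n n ℝ) + D).det := by
    rw [h1, det_mul, det_mul, mul_comm U.det, mul_assoc, hdetU, mul_one]
  have h3 : ((1 : Matrix n n ℝ) + D).det = ∏ i, (1 + hH.eigenvalues i) := by
    rw [hD, ← diagonal_one, diagonal_add, det_diagonal]
    simp
  rw [h2, h3]
  calc (1:ℝ) = ∏ _i : n, (1:ℝ) := by simp
    _ ≤ ∏ i, (1 + hH.eigenvalues i) :=
      Finset.prod_le_prod (fun i _ => by norm_num)
        (fun i _ => by linarith [hM.eigenvalues_nonneg i])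

open scoped MatrixOrder in
lemma det_mono {A D : Matrix n n ℝ} (hA : A.PosDef) (hD : D.PosSemidef) :
    A.det ≤ (A + D).det := by
  set S := CFC.sqrt A with hSdef
  have hSS : S * S = A := CFC.sqrt_mul_sqrt_self A hA.posSemidef.nonneg
  have hSpsd : S.PosSemidef := (CFC.sqrt_nonneg A).posSemidef
  have hdetS : IsUnit S.det := by
    have : S.det * S.det = A.det := by rw [← det_mul, hSS]
    have hApos := hA.det_pos
    exact isUnit_iff_ne_zero.mpr (fun h => by simp [h] at this; linarith)
  have hinv : S * S⁻¹ = 1 := mul_nonsing_inv _ hdetS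
  have hinv' : S⁻¹ * S = 1 := nonsing_inv_mul _ hdetS
  have hX : (S⁻¹ * D * S⁻¹).PosSemidef := by
    have := hD.mul_mul_conjTranspose_same S⁻¹
    rwa [conjTranspose_nonsing_inv, hSpsd.1.eq] at this
  have hEq : A + D = S * (1 + S⁻¹ * D * S⁻¹) * S := by
    rw [mul_add, mul_one, add_mul, hSS]
    congr 1
    calc D = (S * S⁻¹) * D * (S⁻¹ * S) := by
          rw [hinv, hinv', Matrix.one_mul, Matrix.mul_one]
      _ = S * (S⁻¹ * D * S⁻¹) * S := by simp only [Matrix.mul_assoc]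
  calc A.det = S.det * 1 * S.det := by rw [mul_one, ← det_mul, hSS]
    _ ≤ S.det * (1 + S⁻¹ * D * S⁻¹).det * S.det := by
        have h1 := one_le_det_one_add hX
        nlinarith [sq_nonneg S.det, hA.det_pos, (by rw [← det_mul, hSS] : S.det * S.det = A.det)]
    _ = (A + D).det := by rw [hEq, det_mul, det_mul]

lemma key_det_le {S0 S' T G : Matrix n n ℝ} (hS : S0.PosDef) (hS' : S'.PosDef)
    (hpsd : (S' - Tᵀ * S0 * T).PosSemidef) {P : ℝ} (hP : 0 ≤ P) :
    (1 + P • (S'⁻¹ * (Tᵀ * G) * (Tᵀ * G)ᵀ)).det ≤ (1 + P • (S0⁻¹ * G * Gᵀ)).det := by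
  have ct : ∀ A : Matrix n n ℝ, Aᴴ = Aᵀ := fun A =>
    conjTranspose_eq_transpose_of_trivial A
  haveI : Invertible S' := S'.invertibleOfIsUnitDet hS'.det_pos.ne'.isUnit
  haveI : Invertible S0⁻¹ := (S0⁻¹).invertibleOfIsUnitDet hS.inv.det_pos.ne'.isUnit
  -- Schur complement argument
  have hblock : (fromBlocks S' Tᵀ (Tᵀ)ᴴ S0⁻¹).PosSemidef := by
    rw [PosDef.fromBlocks₂₂ S' Tᵀ hS.inv]
    rw [ct, nonsing_inv_nonsing_inv _ (isUnit_iff_isUnit_det _ |>.mp hS.isUnit)]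
    exact hpsd
  have hmid : (S0⁻¹ - T * S'⁻¹ * Tᵀ).PosSemidef := by
    have := (PosDef.fromBlocks₁₁ Tᵀ S0⁻¹ hS').mp hblock
    rwa [ct] at this
  set G' := Tᵀ * G with hG'
  have hcyc1 : (1 + P • (S'⁻¹ * G' * G'ᵀ)).det = (1 + P • (G'ᵀ * S'⁻¹ * G')).det := by
    have h1 : P • (S'⁻¹ * G' * G'ᵀ) = (S'⁻¹ * G') * (P • G'ᵀ) := by
      rw [Matrix.mul_smul]
    have h2 : (P • G'ᵀ) * (S'⁻¹ * G') = P • (G'ᵀ * S'⁻¹ * G') := by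
      rw [Matrix.smul_mul, Matrix.mul_assoc]
    rw [h1, det_one_add_mul_comm, h2]
  have hcyc2 : (1 + P • (S0⁻¹ * G * Gᵀ)).det = (1 + P • (Gᵀ * S0⁻¹ * G)).det := by
    have h1 : P • (S0⁻¹ * G * Gᵀ) = (S0⁻¹ * G) * (P • Gᵀ) := by
      rw [Matrix.mul_smul]
    have h2 : (P • Gᵀ) * (S0⁻¹ * G) = P • (Gᵀ * S0⁻¹ * G) := by
      rw [Matrix.smul_mul, Matrix.mul_assoc]
    rw [h1, det_one_add_mul_comm, h2]
  set X := P • (G'ᵀ * S'⁻¹ * G') with hX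
  set Y := P • (Gᵀ * S0⁻¹ * G) with hY
  have hXpsd : X.PosSemidef := by
    have := hS'.inv.posSemidef.conjTranspose_mul_mul_same G'
    rw [ct] at this
    exact psd_smul this hP
  have hdiff : (Y - X).PosSemidef := by
    have hmm : Gᵀ * (S0⁻¹ - T * S'⁻¹ * Tᵀ) * G = Gᵀ * S0⁻¹ * G - G'ᵀ * S'⁻¹ * G' := by
      rw [hG', transpose_mul]
      noncomm_ring
    have := hmid.conjTranspose_mul_mul_same G
    rw [ct, hmm] at this
    rw [hY, hX, ← smul_sub]
    exact psd_smul this hP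
  have h1X : (1 + X).PosDef := Matrix.PosDef.add_posSemidef Matrix.PosDef.one hXpsd
  have := det_mono h1X hdiff
  rw [show (1 + X) + (Y - X) = 1 + Y by abel] at this
  rw [hcyc1, hcyc2]
  exact this

lemma one_le_det_obj {S G : Matrix n n ℝ} (hS : S.PosDef) {c : ℝ} (hc : 0 ≤ c) :
    1 ≤ (1 + c • (S⁻¹ * G * Gᵀ)).det := by
  have hcyc : (1 + c • (S⁻¹ * G * Gᵀ)).det = (1 + c • (Gᵀ * S⁻¹ * G)).det := by
    have h1 : c • (S⁻¹ * G * Gᵀ) = (S⁻¹ * G) * (c • Gᵀ) := by rw [Matrix.mul_smul]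
    have h2 : (c • Gᵀ) * (S⁻¹ * G) = c • (Gᵀ * S⁻¹ * G) := by
      rw [Matrix.smul_mul, Matrix.mul_assoc]
    rw [h1, det_one_add_mul_comm, h2]
  rw [hcyc]
  refine one_le_det_one_add (psd_smul ?_ hc)
  have := hS.inv.posSemidef.conjTranspose_mul_mul_same G
  rwa [conjTranspose_eq_transpose_of_trivial] at this

lemma pd_smul {M : Matrix n n ℝ} (hM : M.PosDef) {c : ℝ} (hc : 0 < c) :
    (c • M).PosDef :=
  posDef_iff_dotProduct_mulVec.mpr ⟨(psd_smul hM.posSemidef hc.le).1, fun x hx => by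
    rw [smul_mulVec, dotProduct_smul]
    exact mul_pos hc (hM.dotProduct_mulVec_pos hx)⟩


end GenieAux

/-- Fixing `T = I` in the genie-MAC outer-bound optimization (keeping the noise
covariance `Σ` free) does not change the optimal value. -/
theorem genie_opt_T_eq_id (K : ℕ) (hK : 1 ≤ K) (H : Matrix (Fin K) (Fin K) ℝ)
    (P N : ℝ) (hP : 0 < P) (hN : 0 < N) :
    sInf {x : ℝ | ∃ G Sg : Matrix (Fin K) (Fin K) ℝ,
        Sg.PosDef ∧
        (∀ i j : Fin K, i ≤ j → G i j = H i j) ∧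
        (∀ i : Fin K, Sg i i ≤ N) ∧
        x = (1 / 2) * Real.log ((1 + P • (Sg⁻¹ * G * Gᵀ)).det)} =
      sInf {x : ℝ | ∃ G Sg T : Matrix (Fin K) (Fin K) ℝ,
        Sg.PosDef ∧
        (∀ i j : Fin K, i ≤ j → (Tᵀ * G) i j = H i j) ∧
        (∀ i : Fin K, (Tᵀ * Sg * T) i i ≤ N) ∧
        x = (1 / 2) * Real.log ((1 + P • (Sg⁻¹ * G * Gᵀ)).det)} := by
  set S1 := {x : ℝ | ∃ G Sg : Matrix (Fin K) (Fin K) ℝ,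
        Sg.PosDef ∧
        (∀ i j : Fin K, i ≤ j → G i j = H i j) ∧
        (∀ i : Fin K, Sg i i ≤ N) ∧
        x = (1 / 2) * Real.log ((1 + P • (Sg⁻¹ * G * Gᵀ)).det)} with hS1
  set S2 := {x : ℝ | ∃ G Sg T : Matrix (Fin K) (Fin K) ℝ,
        Sg.PosDef ∧
        (∀ i j : Fin K, i ≤ j → (Tᵀ * G) i j = H i j) ∧
        (∀ i : Fin K, (Tᵀ * Sg * T) i i ≤ N) ∧
        x = (1 / 2) * Real.log ((1 + P • (Sg⁻¹ * G * Gᵀ)).det)} with hS2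
  have ct : ∀ A : Matrix (Fin K) (Fin K) ℝ, Aᴴ = Aᵀ := fun A =>
    conjTranspose_eq_transpose_of_trivial A
  have hsub : S1 ⊆ S2 := by
    rintro x ⟨G, Sg, h1, h2, h3, rfl⟩
    exact ⟨G, Sg, 1, h1, fun i j hij => by simpa using h2 i j hij,
      fun i => by simpa using h3 i, rfl⟩
  have hbdd1 : BddBelow S1 := by
    refine ⟨0, ?_⟩
    rintro x ⟨G, Sg, h1, -, -, rfl⟩
    have := one_le_det_obj (G := G) h1 hP.le
    have hlog := Real.log_nonneg this
    positivity
  have hbdd2 : BddBelow S2 := by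
    refine ⟨0, ?_⟩
    rintro x ⟨G, Sg, T, h1, -, -, rfl⟩
    have := one_le_det_obj (G := G) h1 hP.le
    have hlog := Real.log_nonneg this
    positivity
  have hne1 : S1.Nonempty := by
    refine ⟨_, H, N • 1, pd_smul Matrix.PosDef.one hN, fun i j _ => rfl, fun i => ?_, rfl⟩
    simp
  refine le_antisymm ?_ (csInf_le_csInf hbdd2 hne1 hsub)
  refine le_csInf (hne1.mono hsub) ?_
  rintro x ⟨G, Sg, T, hSg, hG, hdiag, rfl⟩
  set M := Sg⁻¹ * G * Gᵀ with hM
  have hd0 : (1:ℝ) ≤ (1 + P • M).det := one_le_det_obj hSg hP.le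
  have hstep : ∀ θ ∈ Set.Ioo (0:ℝ) 1,
      sInf S1 ≤ (1/2) * Real.log ((1 + (P/(1-θ)) • M).det) := by
    intro θ hθ
    obtain ⟨hθ0, hθ1⟩ := hθ
    have h1θ : (0:ℝ) < 1 - θ := by linarith
    set Sg' := (1-θ) • (Tᵀ * Sg * T) + (θ * N) • (1 : Matrix (Fin K) (Fin K) ℝ) with hSg'
    have hTST : (Tᵀ * Sg * T).PosSemidef := by
      have := hSg.posSemidef.conjTranspose_mul_mul_same T
      rwa [ct] at this
    have hSg'pd : Sg'.PosDef :=
      Matrix.PosDef.posSemidef_add (psd_smul hTST h1θ.le)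
        (pd_smul Matrix.PosDef.one (mul_pos hθ0 hN))
    have hdiag' : ∀ i, Sg' i i ≤ N := by
      intro i
      have h1 : Sg' i i = (1-θ) * (Tᵀ * Sg * T) i i + θ * N := by
        simp [hSg', Matrix.add_apply, Matrix.smul_apply, Matrix.one_apply_eq]
      rw [h1]
      have := hdiag i
      nlinarith
    have hmem : (1/2) * Real.log ((1 + P • (Sg'⁻¹ * (Tᵀ * G) * (Tᵀ * G)ᵀ)).det) ∈ S1 :=
      ⟨Tᵀ * G, Sg', hSg'pd, hG, hdiag', rfl⟩
    have hle := csInf_le hbdd1 hmem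
    refine hle.trans ?_
    have hSg2 : ((1-θ) • Sg).PosDef := pd_smul hSg h1θ
    have hpsd : (Sg' - Tᵀ * ((1-θ) • Sg) * T).PosSemidef := by
      have he : Tᵀ * ((1-θ) • Sg) * T = (1-θ) • (Tᵀ * Sg * T) := by
        rw [Matrix.mul_smul, Matrix.smul_mul]
      rw [he, hSg']
      simpa using psd_smul (Matrix.PosSemidef.one) (mul_pos hθ0 hN).le
    have hkey := key_det_le (G := G) hSg2 hSg'pd hpsd hP.le
    have hrw : P • (((1-θ) • Sg)⁻¹ * G * Gᵀ) = (P/(1-θ)) • M := by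
      haveI : Invertible (1-θ) := invertibleOfNonzero h1θ.ne'
      have heq := Matrix.inv_smul (A := Sg) (1-θ) ((isUnit_iff_isUnit_det Sg).mp hSg.isUnit)
      rw [heq, invOf_eq_inv, Matrix.smul_mul, Matrix.smul_mul, hM, smul_smul, div_eq_mul_inv]
    rw [hrw] at hkey
    have hpos : (0:ℝ) < (1 + P • (Sg'⁻¹ * (Tᵀ * G) * (Tᵀ * G)ᵀ)).det :=
      lt_of_lt_of_le one_pos (one_le_det_obj hSg'pd hP.le)
    have := Real.log_le_log hpos hkey
    linarith
  have hcont : Filter.Tendsto (fun θ : ℝ => (1/2) * Real.log ((1 + (P/(1-θ)) • M).det))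
      (nhdsWithin 0 (Set.Ioi 0)) (nhds ((1/2) * Real.log ((1 + P • M).det))) := by
    have hf : ContinuousAt (fun θ : ℝ => P/(1-θ)) 0 :=
      ContinuousAt.div continuousAt_const (by fun_prop) (by norm_num)
    have hmat : ContinuousAt (fun θ : ℝ => (1 + (P/(1-θ)) • M : Matrix (Fin K) (Fin K) ℝ)) 0 :=
      continuousAt_const.add (hf.smul continuousAt_const)
    have hdet : ContinuousAt (fun θ : ℝ => ((1 + (P/(1-θ)) • M : Matrix (Fin K) (Fin K) ℝ)).det) 0 :=
      (Continuous.matrix_det continuous_id).continuousAt.comp hmat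
    have hval : ((1 + (P/(1-(0:ℝ))) • M : Matrix (Fin K) (Fin K) ℝ)).det = (1 + P • M).det := by
      norm_num
    have hlog : ContinuousAt (fun θ : ℝ => Real.log ((1 + (P/(1-θ)) • M).det)) 0 := by
      refine (Real.continuousAt_log ?_).comp hdet
      rw [hval]; linarith
    have hca : ContinuousAt (fun θ : ℝ => (1/2) * Real.log ((1 + (P/(1-θ)) • M).det)) 0 :=
      continuousAt_const.mul hlog
    have h2 : Filter.Tendsto (fun θ : ℝ => (1/2) * Real.log ((1 + (P/(1-θ)) • M).det))
        (nhdsWithin 0 (Set.Ioi 0))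
        (nhds ((1/2) * Real.log ((1 + (P/(1-(0:ℝ))) • M).det))) :=
      hca.continuousWithinAt
    simpa using h2
  have hev : ∀ᶠ θ in nhdsWithin 0 (Set.Ioi (0:ℝ)),
      sInf S1 ≤ (1/2) * Real.log ((1 + (P/(1-θ)) • M).det) := by
    filter_upwards [Ioo_mem_nhdsGT_of_mem (by constructor <;> norm_num : (0:ℝ) ∈ Set.Ico 0 1)]
      with θ hθ using hstep θ hθ
  exact ge_of_tendsto hcont hev
end

section
/- Let K ≥ 1, let H be a K×K real matrix, and let P > 0 and N > 0 be real. Define f* as the infimum of (1/2)·log det(I + P·Σ⁻¹·G·Gᵀ) over all triples (G, Σ, T) of K×K real matrices with Σ symmetric positive definite, (TᵀG)_{i,j} = H_{i,j} for all i ≤ j, and (TᵀΣT)_{i,i} ≤ N for all i. Define k* as the infimum of (1/2)·log det(I + P·Σ⁻¹) over all pairs (Σ, T) with Σ symmetric positive definite, T_{j,i} = H_{i,j} for all i ≤ j, and (TᵀΣT)_{i,i} ≤ N for all i (i.e., the sub-problem obtained from f* by fixing G = I). Then k* = f*. -/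
open Matrix

private lemma psd_smul' {n : ℕ} {A : Matrix (Fin n) (Fin n) ℝ} (hA : A.PosSemidef) {c : ℝ}
    (hc : 0 ≤ c) : (c • A).PosSemidef := by
  constructor
  · unfold Matrix.IsHermitian
    rw [conjTranspose_smul, hA.1.eq]
    norm_num
  · intro x
    exact (hA.smul hc).2 x

private lemma psd_diag_nonneg' {n : ℕ} {A : Matrix (Fin n) (Fin n) ℝ} (hA : A.PosSemidef)
    (i : Fin n) : 0 ≤ A i i := by
  have h := hA.dotProduct_mulVec_nonneg (Pi.single i 1)
  simpa [dotProduct, Pi.single_apply, mulVec, Finset.sum_ite_eq] using h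

private lemma one_le_det_one_add' {n : ℕ} {B : Matrix (Fin n) (Fin n) ℝ} (hB : B.PosSemidef) :
    1 ≤ (1 + B).det := by
  have hU := (Matrix.mem_unitaryGroup_iff).mp hB.1.eigenvectorUnitary.2
  set U : Matrix (Fin n) (Fin n) ℝ := (hB.1.eigenvectorUnitary : Matrix (Fin n) (Fin n) ℝ)
  have key : 1 + B = U * (1 + diagonal ((RCLike.ofReal : ℝ → ℝ) ∘ hB.1.eigenvalues)) * star U := by
    rw [mul_add, add_mul, mul_one, hU]
    conv_lhs => rw [hB.1.spectral_theorem, Unitary.conjStarAlgAut_apply]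
  have hdet : (1 + B).det = (1 + diagonal ((RCLike.ofReal : ℝ → ℝ) ∘ hB.1.eigenvalues)).det := by
    rw [key, det_mul, det_mul, mul_comm, ← mul_assoc, mul_comm ((star U).det) (U.det),
      ← det_mul, hU, det_one, one_mul]
  rw [hdet, ← diagonal_one, diagonal_add, det_diagonal]
  calc (1:ℝ) = ∏ _i : Fin n, 1 := by simp
    _ ≤ ∏ i : Fin n, (1 + ((RCLike.ofReal : ℝ → ℝ) ∘ hB.1.eigenvalues) i) := by
        apply Finset.prod_le_prod (fun i _ => zero_le_one)
        intro i _
        have := hB.eigenvalues_nonneg i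
        simp only [Function.comp_apply, RCLike.ofReal_real_eq_id, id_eq]
        linarith


/-- Fixing `G = I` in the genie-MAC outer-bound optimization (so the constraint
becomes `T_{j,i} = H_{i,j}` for `i ≤ j` and the objective `(1/2)log det(I + P Σ⁻¹)`)
does not change the optimal value. -/
theorem genie_opt_G_eq_id (K : ℕ) (hK : 1 ≤ K) (H : Matrix (Fin K) (Fin K) ℝ)
    (P N : ℝ) (hP : 0 < P) (hN : 0 < N) :
    sInf {x : ℝ | ∃ Sg T : Matrix (Fin K) (Fin K) ℝ,
        Sg.PosDef ∧
        (∀ i j : Fin K, i ≤ j → T j i = H i j) ∧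
        (∀ i : Fin K, (Tᵀ * Sg * T) i i ≤ N) ∧
        x = (1 / 2) * Real.log ((1 + P • Sg⁻¹).det)} =
      sInf {x : ℝ | ∃ G Sg T : Matrix (Fin K) (Fin K) ℝ,
        Sg.PosDef ∧
        (∀ i j : Fin K, i ≤ j → (Tᵀ * G) i j = H i j) ∧
        (∀ i : Fin K, (Tᵀ * Sg * T) i i ≤ N) ∧
        x = (1 / 2) * Real.log ((1 + P • (Sg⁻¹ * G * Gᵀ)).det)} := by
  set S1 := {x : ℝ | ∃ Sg T : Matrix (Fin K) (Fin K) ℝ,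
        Sg.PosDef ∧
        (∀ i j : Fin K, i ≤ j → T j i = H i j) ∧
        (∀ i : Fin K, (Tᵀ * Sg * T) i i ≤ N) ∧
        x = (1 / 2) * Real.log ((1 + P • Sg⁻¹).det)} with hS1
  set S2 := {x : ℝ | ∃ G Sg T : Matrix (Fin K) (Fin K) ℝ,
        Sg.PosDef ∧
        (∀ i j : Fin K, i ≤ j → (Tᵀ * G) i j = H i j) ∧
        (∀ i : Fin K, (Tᵀ * Sg * T) i i ≤ N) ∧
        x = (1 / 2) * Real.log ((1 + P • (Sg⁻¹ * G * Gᵀ)).det)} with hS2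
  -- S1 ⊆ S2
  have hsub : S1 ⊆ S2 := by
    rintro x ⟨Sg, T, hSg, hHc, hNc, hx⟩
    exact ⟨1, Sg, T, hSg, fun i j hij => by simpa [transpose_apply] using hHc i j hij, hNc,
      by simpa using hx⟩
  -- S1 nonempty
  have hne1 : S1.Nonempty := by
    classical
    set T0 : Matrix (Fin K) (Fin K) ℝ := fun a b => if b ≤ a then H b a else 0 with hT0
    set S : ℝ := ∑ i, (T0ᵀ * T0) i i with hSdef
    have hdiag_nonneg : ∀ i, 0 ≤ (T0ᵀ * T0) i i := by
      intro i
      simp only [mul_apply, transpose_apply]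
      exact Finset.sum_nonneg fun k _ => mul_self_nonneg _
    have hS0 : 0 ≤ S := Finset.sum_nonneg fun i _ => hdiag_nonneg i
    have hS1pos : (0:ℝ) < S + 1 := by linarith
    set c : ℝ := N / (S + 1) with hc
    have hcpos : 0 < c := div_pos hN hS1pos
    refine ⟨(1/2) * Real.log ((1 + P • ((c • (1 : Matrix (Fin K) (Fin K) ℝ)))⁻¹).det),
      c • 1, T0, ?_, ?_, ?_, rfl⟩
    · rw [smul_one_eq_diagonal]
      exact posDef_diagonal_iff.mpr fun _ => hcpos
    · intro i j hij
      simp [hT0, hij]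
    · intro i
      have hrw : T0ᵀ * (c • (1 : Matrix (Fin K) (Fin K) ℝ)) * T0 = c • (T0ᵀ * T0) := by
        rw [mul_smul_comm, mul_one, smul_mul_assoc]
      rw [hrw, Matrix.smul_apply, smul_eq_mul]
      have hle : (T0ᵀ * T0) i i ≤ S + 1 := by
        have : (T0ᵀ * T0) i i ≤ S :=
          Finset.single_le_sum (f := fun j => (T0ᵀ * T0) j j) (fun j _ => hdiag_nonneg j)
            (Finset.mem_univ i)
        linarith
      calc c * (T0ᵀ * T0) i i ≤ c * (S + 1) := by
            exact mul_le_mul_of_nonneg_left hle hcpos.le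
        _ = N := by rw [hc]; field_simp
  have hne2 : S2.Nonempty := hne1.mono hsub
  -- all elements of S2 are nonneg
  have hlb2 : ∀ x ∈ S2, (0:ℝ) ≤ x := by
    rintro x ⟨G, Sg, T, hSg, _, _, hx⟩
    have hA : (Gᵀ * Sg⁻¹ * G).PosSemidef := by
      have := hSg.inv.posSemidef.conjTranspose_mul_mul_same G
      simpa [conjTranspose_eq_transpose_of_trivial] using this
    have hdet : (1 + P • (Sg⁻¹ * G * Gᵀ)).det = (1 + P • (Gᵀ * Sg⁻¹ * G)).det := by
      rw [show P • (Sg⁻¹ * G * Gᵀ) = (P • (Sg⁻¹ * G)) * Gᵀ from (smul_mul_assoc _ _ _).symm,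
        det_one_add_mul_comm, mul_smul_comm, ← mul_assoc]
    rw [hx, hdet]
    exact mul_nonneg (by norm_num)
      (Real.log_nonneg (one_le_det_one_add' (psd_smul' hA hP.le)))
  have hbdd2 : BddBelow S2 := ⟨0, fun x hx => hlb2 x hx⟩
  have hbdd1 : BddBelow S1 := hbdd2.mono hsub
  refine le_antisymm ?_ (csInf_le_csInf hbdd2 hne1 hsub)
  -- sInf S1 ≤ sInf S2
  apply le_csInf hne2
  rintro x ⟨G, Sg, T, hSg, hHc, hNc, hx⟩
  apply le_of_forall_pos_le_add
  intro ε hε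
  classical
  set A : Matrix (Fin K) (Fin K) ℝ := Gᵀ * Sg⁻¹ * G with hAdef
  have hA : A.PosSemidef := by
    have := hSg.inv.posSemidef.conjTranspose_mul_mul_same G
    simpa [conjTranspose_eq_transpose_of_trivial] using this
  have hxA : x = (1/2) * Real.log ((1 + P • A).det) := by
    rw [hx]
    congr 2
    rw [show P • (Sg⁻¹ * G * Gᵀ) = (P • (Sg⁻¹ * G)) * Gᵀ from (smul_mul_assoc _ _ _).symm,
      det_one_add_mul_comm, mul_smul_comm, ← mul_assoc]
  -- the value function
  set F : ℝ → ℝ := fun δ => (1/2) * Real.log (((1 + P • A) + (P * δ) • (1 : Matrix (Fin K) (Fin K) ℝ)).det) with hFdef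
  have hdetpos : 0 < (1 + P • A).det :=
    (Matrix.PosDef.add_posSemidef Matrix.PosDef.one (psd_smul' hA hP.le)).det_pos
  have hF0 : F 0 = x := by
    rw [hFdef, hxA]
    simp
  have hmat : Continuous fun δ : ℝ => (1 + P • A) + (P * δ) • (1 : Matrix (Fin K) (Fin K) ℝ) :=
    continuous_const.add ((continuous_const.mul continuous_id).smul continuous_const)
  have hFcont : ContinuousAt F 0 := by
    apply ContinuousAt.mul continuousAt_const
    exact ContinuousAt.comp (Real.continuousAt_log (by simpa using hdetpos.ne'))
      hmat.matrix_det.continuousAt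
  have hev : ∀ᶠ δ in nhdsWithin (0:ℝ) (Set.Ioi 0), F δ < x + ε := by
    apply Filter.Eventually.filter_mono nhdsWithin_le_nhds
    have hlt : F 0 < x + ε := by rw [hF0]; linarith
    exact Filter.Tendsto.eventually_lt_const hlt hFcont
  obtain ⟨δ, hδlt, hδmem⟩ := (hev.and self_mem_nhdsWithin).exists
  have hδpos : (0:ℝ) < δ := hδmem
  -- construct the feasible point for S1
  set A' : Matrix (Fin K) (Fin K) ℝ := A + δ • 1 with hA'def
  have hδI : ((δ:ℝ) • (1 : Matrix (Fin K) (Fin K) ℝ)).PosDef := by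
    rw [smul_one_eq_diagonal]
    exact posDef_diagonal_iff.mpr fun _ => hδpos
  have hA' : A'.PosDef := Matrix.PosDef.posSemidef_add hA hδI
  haveI : Invertible A' := hA'.isUnit.invertible
  haveI : Invertible Sg := hSg.isUnit.invertible
  have hSchur : (Sg - G * A'⁻¹ * Gᵀ).PosSemidef := by
    have h1 : (A' - Gᴴ * Sg⁻¹ * G).PosSemidef := by
      have heq : A' - Gᴴ * Sg⁻¹ * G = δ • 1 := by
        rw [conjTranspose_eq_transpose_of_trivial, hA'def, ← hAdef]
        abel
      rw [heq]
      exact hδI.posSemidef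
    have h2 := (Matrix.PosDef.fromBlocks₁₁ G A' hSg).mpr h1
    have h3 := (Matrix.PosDef.fromBlocks₂₂ Sg G hA').mp h2
    rwa [conjTranspose_eq_transpose_of_trivial] at h3
  have hconstr : ∀ i, ((Gᵀ * T)ᵀ * A'⁻¹ * (Gᵀ * T)) i i ≤ N := by
    intro i
    have hpsd := hSchur.conjTranspose_mul_mul_same T
    rw [conjTranspose_eq_transpose_of_trivial] at hpsd
    have h0 := psd_diag_nonneg' hpsd i
    have hexp : Tᵀ * (Sg - G * A'⁻¹ * Gᵀ) * T
        = Tᵀ * Sg * T - (Gᵀ * T)ᵀ * A'⁻¹ * (Gᵀ * T) := by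
      simp only [transpose_mul, transpose_transpose, Matrix.mul_sub, Matrix.sub_mul,
        Matrix.mul_assoc]
    rw [hexp, Matrix.sub_apply] at h0
    have := hNc i
    linarith
  have hmem : F δ ∈ S1 := by
    refine ⟨A'⁻¹, Gᵀ * T, hA'.inv, ?_, hconstr, ?_⟩
    · intro i j hij
      rw [← hHc i j hij]
      simp only [mul_apply, transpose_apply]
      exact Finset.sum_congr rfl fun k _ => mul_comm _ _
    · rw [nonsing_inv_nonsing_inv _ hA'.det_pos.ne'.isUnit]
      show (1/2) * Real.log (((1 + P • A) + (P * δ) • (1 : Matrix (Fin K) (Fin K) ℝ)).det)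
          = (1/2) * Real.log ((1 + P • A').det)
      congr 3
      simp only [hA'def, smul_add, smul_smul, add_assoc]
  calc sInf S1 ≤ F δ := csInf_le hbdd1 hmem
    _ ≤ x + ε := hδlt.le
end

section
/- Let Ĝ be a K×K real matrix and ε > 0 a real number. Then: (i) ε·I + Ĝᵀ·Ĝ is symmetric positive definite; (ii) the matrix I − Ĝ·(ε·I + Ĝᵀ·Ĝ)⁻¹·Ĝᵀ is positive semidefinite; and (iii) consequently, for any K×K real matrix T̂ whose columns t̂_i satisfy t̂_iᵀ t̂_i ≤ N for a real N > 0, setting T = Ĝᵀ·T̂ and Σ = (ε·I + Ĝᵀ·Ĝ)⁻¹, every diagonal entry of Tᵀ·Σ·T is at most N. -/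
open Matrix

/-- Constraint verification in the `G = I` reduction of the genie-MAC optimization:
`εI + ĜᵀĜ` is symmetric positive definite, `I − Ĝ(εI + ĜᵀĜ)⁻¹Ĝᵀ` is positive
semidefinite, and consequently for any `T̂` whose columns have squared norm at most
`N`, the substitution `T = ĜᵀT̂`, `Σ = (εI + ĜᵀĜ)⁻¹` satisfies `(TᵀΣT)_{i,i} ≤ N`. -/
theorem genie_G_eq_id_feasibility (K : ℕ) (Ghat : Matrix (Fin K) (Fin K) ℝ)
    (ε : ℝ) (hε : 0 < ε) :
    (ε • (1 : Matrix (Fin K) (Fin K) ℝ) + Ghatᵀ * Ghat).PosDef ∧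
      ((1 : Matrix (Fin K) (Fin K) ℝ) -
        Ghat * (ε • (1 : Matrix (Fin K) (Fin K) ℝ) + Ghatᵀ * Ghat)⁻¹ * Ghatᵀ).PosSemidef ∧
      (∀ (N : ℝ), 0 < N → ∀ That : Matrix (Fin K) (Fin K) ℝ,
        (∀ i : Fin K, (∑ j : Fin K, That j i * That j i) ≤ N) →
        ∀ i : Fin K,
          ((Ghatᵀ * That)ᵀ * (ε • (1 : Matrix (Fin K) (Fin K) ℝ) + Ghatᵀ * Ghat)⁻¹ *
            (Ghatᵀ * That)) i i ≤ N) := by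
  have hGtG : (Ghatᵀ * Ghat).PosSemidef := by
    simpa [conjTranspose_eq_transpose_of_trivial] using
      posSemidef_conjTranspose_mul_self Ghat
  have hGGt : (Ghat * Ghatᵀ).PosSemidef := by
    simpa [conjTranspose_eq_transpose_of_trivial] using
      posSemidef_self_mul_conjTranspose Ghat
  have hEps : (ε • (1 : Matrix (Fin K) (Fin K) ℝ)).PosDef := by
    rw [smul_one_eq_diagonal]
    exact .diagonal (fun _ => hε)
  have hA : (ε • (1 : Matrix (Fin K) (Fin K) ℝ) + Ghatᵀ * Ghat).PosDef :=
    hEps.add_posSemidef hGtG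
  have hB : (ε • (1 : Matrix (Fin K) (Fin K) ℝ) + Ghat * Ghatᵀ).PosDef :=
    hEps.add_posSemidef hGGt
  set A := ε • (1 : Matrix (Fin K) (Fin K) ℝ) + Ghatᵀ * Ghat with hAdef
  set B := ε • (1 : Matrix (Fin K) (Fin K) ℝ) + Ghat * Ghatᵀ with hBdef
  have hAdet : IsUnit A.det := (Matrix.isUnit_iff_isUnit_det _).1 hA.isUnit
  have hBdet : IsUnit B.det := (Matrix.isUnit_iff_isUnit_det _).1 hB.isUnit
  have h1 : A * A⁻¹ = 1 := Matrix.mul_nonsing_inv _ hAdet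
  have h2 : B⁻¹ * B = 1 := Matrix.nonsing_inv_mul _ hBdet
  have hcomm : Ghat * A = B * Ghat := by
    simp [hAdef, hBdef, Matrix.mul_add, Matrix.add_mul, Matrix.mul_smul,
      Matrix.smul_mul, Matrix.mul_assoc]
  have hpush : Ghat * A⁻¹ = B⁻¹ * Ghat := by
    calc Ghat * A⁻¹ = B⁻¹ * B * Ghat * A⁻¹ := by rw [h2, Matrix.one_mul]
      _ = B⁻¹ * (B * Ghat) * A⁻¹ := by noncomm_ring
      _ = B⁻¹ * (Ghat * A) * A⁻¹ := by rw [hcomm]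
      _ = B⁻¹ * Ghat * (A * A⁻¹) := by noncomm_ring
      _ = B⁻¹ * Ghat := by rw [h1, Matrix.mul_one]
  have hkey : (1 : Matrix (Fin K) (Fin K) ℝ) - Ghat * A⁻¹ * Ghatᵀ = ε • B⁻¹ := by
    rw [hpush]
    calc (1 : Matrix (Fin K) (Fin K) ℝ) - B⁻¹ * Ghat * Ghatᵀ
        = B⁻¹ * B - B⁻¹ * (Ghat * Ghatᵀ) := by rw [h2, Matrix.mul_assoc]
      _ = B⁻¹ * (B - Ghat * Ghatᵀ) := by rw [Matrix.mul_sub]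
      _ = B⁻¹ * (ε • 1) := by rw [hBdef, add_sub_cancel_right]
      _ = ε • B⁻¹ := by rw [Matrix.mul_smul, Matrix.mul_one]
  have hS : ((1 : Matrix (Fin K) (Fin K) ℝ) - Ghat * A⁻¹ * Ghatᵀ).PosSemidef := by
    rw [hkey]
    rw [posSemidef_iff_dotProduct_mulVec]
    refine ⟨?_, fun x => ?_⟩
    · show (ε • B⁻¹)ᴴ = ε • B⁻¹
      simp [← conjTranspose_eq_transpose_of_trivial, hB.inv.isHermitian.eq]
    · rw [smul_mulVec, dotProduct_smul, smul_eq_mul]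
      exact mul_nonneg hε.le ((posSemidef_iff_dotProduct_mulVec.1 hB.inv.posSemidef).2 x)
  refine ⟨hA, hS, fun N hN That hcol i => ?_⟩
  have hM : (Thatᵀ * ((1 : Matrix (Fin K) (Fin K) ℝ) - Ghat * A⁻¹ * Ghatᵀ) * That).PosSemidef := by
    have := hS.mul_mul_conjTranspose_same Thatᵀ
    simpa [conjTranspose_eq_transpose_of_trivial] using this
  have hdiag : 0 ≤ (Thatᵀ * ((1 : Matrix (Fin K) (Fin K) ℝ) - Ghat * A⁻¹ * Ghatᵀ) * That) i i := by
    have := (posSemidef_iff_dotProduct_mulVec.1 hM).2 (Pi.single i 1)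
    simpa [dotProduct_single, mulVec, dotProduct, Pi.single_apply] using this
  have hexp : Thatᵀ * ((1 : Matrix (Fin K) (Fin K) ℝ) - Ghat * A⁻¹ * Ghatᵀ) * That
      = Thatᵀ * That - (Ghatᵀ * That)ᵀ * A⁻¹ * (Ghatᵀ * That) := by
    rw [Matrix.transpose_mul, Matrix.transpose_transpose]
    noncomm_ring
  rw [hexp] at hdiag
  have h3 : (Thatᵀ * That) i i = ∑ j : Fin K, That j i * That j i := by
    simp [Matrix.mul_apply, Matrix.transpose_apply]
  have := hcol i
  rw [Matrix.sub_apply] at hdiag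
  linarith [hdiag, h3 ▸ hcol i]
end

section
/- Let K ≥ 2, let c_1, …, c_K and b_1, …, b_K be real numbers, and set S_i = Σ_{j=i}^K b_j² for 1 ≤ i ≤ K. For 1 ≤ j < i ≤ K define v_{i,j} = −c_i·c_j·S_i / ((Σ_{m=1}^{i−1} c_m²)·S_i + 1), and set v_{i,i} = 1. Then there exist real numbers d_{m,n} for 1 ≤ m, n ≤ K with d_{m,n} = 1 whenever m ≤ n, such that for every i with 2 ≤ i ≤ K and every n with 1 ≤ n ≤ i−1: Σ_{m=1}^{i} v_{i,m}·c_m·d_{m,n} = 0. -/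
open Finset

noncomputable def genieA (c S : ℕ → ℝ) (n : ℕ) : ℕ → ℝ
  | 0 => 0
  | (m+1) => genieA c S n m + c (m+1) ^ 2 *
      (if m + 1 ≤ n then 1 else
        genieA c S n m * S (m+1) / ((∑ j ∈ Finset.Icc 1 m, c j ^ 2) * S (m+1) + 1))

noncomputable def genieD (c S : ℕ → ℝ) (m n : ℕ) : ℝ :=
  if m ≤ n then 1 else
    genieA c S n (m - 1) * S m / ((∑ j ∈ Finset.Icc 1 (m - 1), c j ^ 2) * S m + 1)

lemma genieA_eq (c S : ℕ → ℝ) (n : ℕ) :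
    ∀ m, genieA c S n m = ∑ j ∈ Finset.Icc 1 m, c j ^ 2 * genieD c S j n := by
  intro m
  induction m with
  | zero => simp [genieA]
  | succ m ih =>
      rw [Finset.sum_Icc_succ_top (Nat.one_le_iff_ne_zero.mpr (Nat.succ_ne_zero m)), ← ih]
      show genieA c S n (m+1) = _
      rw [genieA]
      simp [genieD]

/-- Existence of the free parameters `d_{m,n}` (with `d_{m,n} = 1` for `m ≤ n`)
satisfying the orthogonality conditions `∑_{m=1}^{i} v_{i,m} c_m d_{m,n} = 0` for
all `2 ≤ i ≤ K` and `1 ≤ n ≤ i−1`, where `v_{i,j}` are the subdiagonal entries of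
the lower-triangular unit-diagonal matrix `V` used to evaluate the genie-MAC outer
bound for the degraded channel. -/
theorem genie_d_parameters_exist (K : ℕ) (hK : 2 ≤ K) (c b : ℕ → ℝ)
    (S : ℕ → ℝ) (hS : ∀ i, S i = ∑ j ∈ Finset.Icc i K, b j ^ 2)
    (v : ℕ → ℕ → ℝ)
    (hvlt : ∀ i j : ℕ, 1 ≤ j → j < i → i ≤ K →
      v i j = -(c i * c j * S i) / ((∑ m ∈ Finset.Icc 1 (i - 1), c m ^ 2) * S i + 1))
    (hvdiag : ∀ i : ℕ, v i i = 1) :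
    ∃ d : ℕ → ℕ → ℝ, (∀ m n : ℕ, m ≤ n → d m n = 1) ∧
      ∀ i : ℕ, 2 ≤ i → i ≤ K → ∀ n : ℕ, 1 ≤ n → n ≤ i - 1 →
        (∑ m ∈ Finset.Icc 1 i, v i m * c m * d m n) = 0 := by
  refine ⟨genieD c S, fun m n h => by simp [genieD, h], ?_⟩
  intro i hi2 hiK n hn1 hni
  have hi1 : 1 ≤ i := le_trans (by norm_num) hi2
  have hni' : ¬ i ≤ n := by omega
  have hisub : i - 1 + 1 = i := Nat.succ_pred_eq_of_pos hi1
  set D : ℝ := (∑ j ∈ Finset.Icc 1 (i - 1), c j ^ 2) * S i + 1 with hD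
  set A : ℝ := genieA c S n (i - 1) with hA
  have hsplit : (∑ m ∈ Finset.Icc 1 i, v i m * c m * genieD c S m n)
      = (∑ m ∈ Finset.Icc 1 (i-1), v i m * c m * genieD c S m n)
        + v i i * c i * genieD c S i n := by
    rw [← hisub, Finset.sum_Icc_succ_top (by omega : 1 ≤ i - 1 + 1), Nat.add_sub_cancel]
  rw [hsplit]
  have hterm : ∀ m ∈ Finset.Icc 1 (i-1),
      v i m * c m * genieD c S m n
        = (-(c i * S i) / D) * (c m ^ 2 * genieD c S m n) := by
    intro m hm
    simp only [Finset.mem_Icc] at hm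
    rw [hvlt i m hm.1 (by omega) hiK]
    ring
  rw [Finset.sum_congr rfl hterm, ← Finset.mul_sum, ← genieA_eq, ← hA]
  rw [hvdiag i]
  have hdin : genieD c S i n = A * S i / D := by
    rw [genieD, if_neg hni']
  rw [hdin]
  ring
end

section
/- Let K ≥ 1, let c_1, …, c_K and b_1, …, b_K be real numbers, and set S_i = Σ_{j=i}^K b_j². Let d_{i,j} (1 ≤ i, j ≤ K) be real numbers with d_{i,j} = 1 for i ≤ j, and let G be the K×K matrix with entries g_{i,j} = c_i·b_j·d_{i,j}; set F = I + G·Gᵀ. Let V be the K×K lower-triangular matrix with unit diagonal, zero above the diagonal, and entries v_{i,j} = −c_i·c_j·S_i / ((Σ_{m=1}^{i−1} c_m²)·S_i + 1) for j < i. Assume the orthogonality conditions hold: Σ_{m=1}^{i} v_{i,m}·c_m·d_{m,n} = 0 for all 2 ≤ i ≤ K and 1 ≤ n ≤ i−1 (with v_{i,i} = 1). Then V·F is upper triangular, and its i-th diagonal entry equals (V·F)_{i,i} = 1 + c_i²·S_i / ((Σ_{m=1}^{i−1} c_m²)·S_i + 1) for every 1 ≤ i ≤ K. -/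
open Finset Matrix

private lemma genie_aux (x p s : ℝ) (h : p * s + 1 ≠ 0) :
    x + p * (-(x * s) / (p * s + 1)) = x / (p * s + 1) := by
  field_simp
  ring

/-- Under the orthogonality conditions on the free parameters `d`, the matrix
`V F` (with `F = I + G Gᵀ`, `G = (c_i b_j d_{i,j})`, and `V` the lower-triangular
unit-diagonal matrix with the indicated subdiagonal entries) is upper triangular,
with diagonal entries `(VF)_{i,i} = 1 + c_i² S_i / ((∑_{m=1}^{i−1} c_m²) S_i + 1)`. -/
theorem genie_VF_upper_triangular (K : ℕ) (hK : 1 ≤ K) (c b : ℕ → ℝ)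
    (S : ℕ → ℝ) (hS : ∀ i, S i = ∑ j ∈ Finset.Icc i K, b j ^ 2)
    (d : ℕ → ℕ → ℝ) (hd : ∀ i j : ℕ, i ≤ j → d i j = 1)
    (G : Matrix (Fin K) (Fin K) ℝ)
    (hG : ∀ i j : Fin K, G i j = c (i.val + 1) * b (j.val + 1) * d (i.val + 1) (j.val + 1))
    (F : Matrix (Fin K) (Fin K) ℝ) (hF : F = 1 + G * Gᵀ)
    (V : Matrix (Fin K) (Fin K) ℝ)
    (hVdiag : ∀ i : Fin K, V i i = 1)
    (hVupper : ∀ i j : Fin K, i < j → V i j = 0)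
    (hVlower : ∀ i j : Fin K, j < i →
      V i j = -(c (i.val + 1) * c (j.val + 1) * S (i.val + 1)) /
        ((∑ m ∈ Finset.Icc 1 i.val, c m ^ 2) * S (i.val + 1) + 1))
    (horth : ∀ i n : Fin K, n < i →
      (∑ m : Fin K, V i m * c (m.val + 1) * d (m.val + 1) (n.val + 1)) = 0) :
    (∀ i j : Fin K, j < i → (V * F) i j = 0) ∧
      (∀ i : Fin K, (V * F) i i =
        1 + c (i.val + 1) ^ 2 * S (i.val + 1) /
          ((∑ m ∈ Finset.Icc 1 i.val, c m ^ 2) * S (i.val + 1) + 1)) := by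
  -- abbreviations
  have hSnn : ∀ n, 0 ≤ S n := fun n => by rw [hS]; positivity
  have hQpos : ∀ i : Fin K,
      0 < (∑ m ∈ Finset.Icc 1 i.val, c m ^ 2) * S (i.val + 1) + 1 := by
    intro i
    have h1 : (0:ℝ) ≤ (∑ m ∈ Finset.Icc 1 i.val, c m ^ 2) := by positivity
    have h2 := hSnn (i.val + 1)
    nlinarith [mul_nonneg h1 h2]
  have hQne : ∀ i : Fin K,
      ((∑ m ∈ Finset.Icc 1 i.val, c m ^ 2) * S (i.val + 1) + 1) ≠ 0 :=
    fun i => (hQpos i).ne'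
  -- reindexing lemma 1 : sum of c² below i
  have hsum1 : ∀ i : Fin K,
      (∑ k : Fin K, if (k:ℕ) < (i:ℕ) then c (k.val + 1) ^ 2 else 0)
        = ∑ m ∈ Finset.Icc 1 i.val, c m ^ 2 := by
    intro i
    rw [Fin.sum_univ_eq_sum_range (fun k => if k < (i:ℕ) then c (k + 1) ^ 2 else 0)]
    rw [← Finset.sum_filter]
    have hfil : (Finset.range K).filter (· < (i:ℕ)) = Finset.range i.val := by
      ext x; simp only [Finset.mem_filter, Finset.mem_range]
      have := i.isLt; omega
    rw [hfil]
    rw [show Finset.Icc 1 i.val = Finset.Ico 1 (i.val + 1) by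
      rw [Finset.Ico_add_one_right_eq_Icc]]
    rw [Finset.sum_Ico_eq_sum_range]
    simp only [Nat.add_sub_cancel]
    exact Finset.sum_congr rfl fun k _ => by rw [Nat.add_comm]
  -- reindexing lemma 2 : sum of b² from i onwards
  have hsum2 : ∀ i : Fin K,
      (∑ l : Fin K, if (l:ℕ) < (i:ℕ) then 0 else b (l.val + 1) ^ 2)
        = S (i.val + 1) := by
    intro i
    rw [hS]
    rw [Fin.sum_univ_eq_sum_range (fun l => if l < (i:ℕ) then 0 else b (l + 1) ^ 2)]
    rw [show Finset.Icc (i.val + 1) K = Finset.Ico (i.val + 1) (K + 1) by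
      rw [Finset.Ico_add_one_right_eq_Icc]]
    rw [Finset.sum_Ico_eq_sum_range]
    have hsplit : ∀ l, (if l < (i:ℕ) then (0:ℝ) else b (l + 1) ^ 2)
        = (if (i:ℕ) ≤ l then b (l + 1) ^ 2 else 0) := by
      intro l; by_cases h : l < (i:ℕ) <;> simp [h, Nat.not_le.mpr, Nat.le_of_not_lt] <;> omega
    rw [Finset.sum_congr rfl fun l _ => hsplit l]
    rw [← Finset.sum_filter]
    have hfil : (Finset.range K).filter (fun l => (i:ℕ) ≤ l) = Finset.Ico i.val K := by
      ext x; simp only [Finset.mem_filter, Finset.mem_range, Finset.mem_Ico]; omega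
    rw [hfil, Finset.sum_Ico_eq_sum_range]
    have : K + 1 - (i.val + 1) = K - i.val := by omega
    rw [this]
    exact Finset.sum_congr rfl fun k _ => by rw [show i.val + 1 + k = i.val + k + 1 from by omega]
  -- key row sum A_i
  have hA : ∀ i : Fin K,
      (∑ k : Fin K, V i k * c (k.val + 1))
        = c (i.val + 1) / ((∑ m ∈ Finset.Icc 1 i.val, c m ^ 2) * S (i.val + 1) + 1) := by
    intro i
    have hterm : ∀ k : Fin K, V i k * c (k.val + 1)
        = (if k = i then c (i.val + 1) else 0)
          + (if (k:ℕ) < (i:ℕ) then c (k.val + 1) ^ 2 else 0) *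
            (-(c (i.val + 1) * S (i.val + 1)) /
              ((∑ m ∈ Finset.Icc 1 i.val, c m ^ 2) * S (i.val + 1) + 1)) := by
      intro k
      rcases lt_trichotomy k i with h | h | h
      · have hk : (k:ℕ) < (i:ℕ) := h
        rw [hVlower i k h]
        simp only [if_pos hk, if_neg (Fin.ne_of_lt h)]
        field_simp
        ring
      · subst h
        simp [hVdiag]
      · have hk : ¬ ((k:ℕ) < (i:ℕ)) := by exact Nat.not_lt.mpr (le_of_lt h)
        rw [hVupper i k h]
        simp [Fin.ne_of_gt h, hk]
    rw [Finset.sum_congr rfl fun k _ => hterm k, Finset.sum_add_distrib]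
    rw [Finset.sum_ite_eq' Finset.univ i (fun _ => c (i.val + 1))]
    rw [← Finset.sum_mul, hsum1 i]
    simp only [Finset.mem_univ, if_pos]
    exact genie_aux _ _ _ (hQne i)
  -- column sums of V * G
  have hcol : ∀ i l : Fin K, (∑ k : Fin K, V i k * G k l)
      = if (l:ℕ) < (i:ℕ) then 0
        else (c (i.val + 1) / ((∑ m ∈ Finset.Icc 1 i.val, c m ^ 2) * S (i.val + 1) + 1))
          * b (l.val + 1) := by
    intro i l
    by_cases h : (l:ℕ) < (i:ℕ)
    · rw [if_pos h]
      have horth' := horth i l (Fin.lt_def.mpr h)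
      calc (∑ k : Fin K, V i k * G k l)
          = (∑ k : Fin K, V i k * c (k.val + 1) * d (k.val + 1) (l.val + 1)) * b (l.val + 1) := by
            rw [Finset.sum_mul]
            exact Finset.sum_congr rfl fun k _ => by rw [hG]; ring
        _ = 0 := by rw [horth']; ring
    · rw [if_neg h]
      push_neg at h
      have hterm : ∀ k : Fin K, V i k * G k l = V i k * c (k.val + 1) * b (l.val + 1) := by
        intro k
        rw [hG]
        rcases le_or_gt k i with hk | hk
        · rw [hd (k.val + 1) (l.val + 1) (by have : (k:ℕ) ≤ (i:ℕ) := hk; omega)]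
          ring
        · rw [hVupper i k hk]; ring
      rw [Finset.sum_congr rfl fun k _ => hterm k, ← Finset.sum_mul, hA i]
  -- expansion of (V * F) i j
  have hmul : ∀ i j : Fin K, (V * F) i j
      = V i j + ∑ l : Fin K, (∑ k : Fin K, V i k * G k l) * G j l := by
    intro i j
    rw [hF]
    simp only [Matrix.mul_apply, Matrix.add_apply, Matrix.one_apply, Matrix.transpose_apply]
    have : ∀ k : Fin K,
        V i k * ((if k = j then (1:ℝ) else 0) + ∑ l : Fin K, G k l * G j l)
        = (if k = j then V i k else 0) + ∑ l : Fin K, V i k * (G k l * G j l) := by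
      intro k
      rw [mul_add, Finset.mul_sum]
      by_cases h : k = j <;> simp [h]
    rw [Finset.sum_congr rfl fun k _ => this k, Finset.sum_add_distrib]
    rw [Finset.sum_ite_eq' Finset.univ j (fun k => V i k)]
    simp only [Finset.mem_univ, if_pos]
    congr 1
    rw [Finset.sum_comm]
    exact Finset.sum_congr rfl fun l _ => by rw [Finset.sum_mul]; exact Finset.sum_congr rfl fun k _ => by ring
  -- the common tail sum
  have htail : ∀ i j : Fin K, (j:ℕ) ≤ (i:ℕ) →
      (∑ l : Fin K, (∑ k : Fin K, V i k * G k l) * G j l)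
        = (c (i.val + 1) / ((∑ m ∈ Finset.Icc 1 i.val, c m ^ 2) * S (i.val + 1) + 1))
          * c (j.val + 1) * S (i.val + 1) := by
    intro i j hji
    have hterm : ∀ l : Fin K, (∑ k : Fin K, V i k * G k l) * G j l
        = (if (l:ℕ) < (i:ℕ) then 0 else b (l.val + 1) ^ 2)
          * ((c (i.val + 1) / ((∑ m ∈ Finset.Icc 1 i.val, c m ^ 2) * S (i.val + 1) + 1))
            * c (j.val + 1)) := by
      intro l
      rw [hcol i l, hG]
      by_cases h : (l:ℕ) < (i:ℕ)
      · simp [h]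
      · rw [if_neg h, if_neg h]
        push_neg at h
        rw [hd (j.val + 1) (l.val + 1) (by omega)]
        ring
    rw [Finset.sum_congr rfl fun l _ => hterm l, ← Finset.sum_mul, hsum2 i]
    ring
  constructor
  · intro i j hji
    have hji' : (j:ℕ) < (i:ℕ) := hji
    rw [hmul i j, htail i j (le_of_lt hji'), hVlower i j hji]
    ring
  · intro i
    rw [hmul i i, htail i i le_rfl, hVdiag i]
    ring
end

section
/- Let K ≥ 1, let a_1, …, a_K be real numbers with a_1² ≤ a_2² ≤ … ≤ a_K², set a_0 = 0 and c_i = √(a_i² − a_{i-1}²), let b_1, …, b_K be real numbers, and set S_i = Σ_{j=i}^K b_j². Then there exist real numbers d_{i,j} (1 ≤ i, j ≤ K) with d_{i,j} = 1 for i ≤ j, such that the K×K matrix G with entries g_{i,j} = c_i·b_j·d_{i,j} satisfies det(I + G·Gᵀ) = Π_{i=1}^K (1 + (a_i² − a_{i-1}²)·S_i / (a_{i-1}²·S_i + 1)) = Π_{i=1}^K (a_i²·S_i + 1)/(a_{i-1}²·S_i + 1). -/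
open Finset Matrix

lemma genie_Icc_succ (m n : ℕ) (h : m ≤ n + 1) :
    Finset.Icc m (n+1) = insert (n+1) (Finset.Icc m n) := by
  ext x; simp [Finset.mem_Icc, Finset.mem_insert]; omega

lemma genie_sum_shift (f : ℕ → ℝ) (m n : ℕ) :
    ∑ j ∈ Finset.Ico m n, f (j + 1) = ∑ j ∈ Finset.Icc (m+1) n, f j := by
  rw [Finset.sum_Ico_eq_sum_range]
  have h1 : Finset.Icc (m+1) n = Finset.Ico (m+1) (n+1) := by rw [Finset.Ico_add_one_right_eq_Icc]
  rw [h1, Finset.sum_Ico_eq_sum_range]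
  have h2 : n + 1 - (m+1) = n - m := by omega
  rw [h2]
  exact Finset.sum_congr rfl (fun i _ => by ring_nf)

lemma genie_prod_shift (f : ℕ → ℝ) (n : ℕ) :
    ∏ j ∈ Finset.range n, f (j + 1) = ∏ j ∈ Finset.Icc 1 n, f j := by
  induction n with
  | zero => simp
  | succ n ih =>
    rw [Finset.prod_range_succ, ih, genie_Icc_succ 1 n (by omega),
      Finset.prod_insert (by simp)]
    ring


noncomputable def gDm (a S : ℕ → ℝ) (i : ℕ) : ℝ := a (i-1)^2 * S i + 1
noncomputable def gLam (a S : ℕ → ℝ) (i : ℕ) : ℝ := S i / gDm a S i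
noncomputable def gRho (a S : ℕ → ℝ) (m : ℕ) : ℝ := (a m^2 * S m + 1) / gDm a S m
noncomputable def gE (a S : ℕ → ℝ) (j i : ℕ) : ℝ :=
  a j^2 * ∏ m ∈ Finset.Icc (j+1) (i-1), gRho a S m
noncomputable def gD (a S : ℕ → ℝ) (i j : ℕ) : ℝ :=
  if i ≤ j then 1 else gLam a S i * gE a S j i

section scalar
variable (K : ℕ) (a b c S : ℕ → ℝ)

lemma gS_nonneg (hS : ∀ i, S i = ∑ j ∈ Finset.Icc i K, b j ^ 2) (i : ℕ) : 0 ≤ S i := by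
  rw [hS]; exact Finset.sum_nonneg (fun j _ => sq_nonneg _)

lemma gDm_pos (hS : ∀ i, S i = ∑ j ∈ Finset.Icc i K, b j ^ 2) (i : ℕ) :
    0 < gDm a S i := by
  have := gS_nonneg K b S hS i
  have : 0 ≤ a (i-1)^2 * S i := mul_nonneg (sq_nonneg _) this
  unfold gDm; linarith

lemma gc2 (ha0 : a 0 = 0)
    (hmono : ∀ i ∈ Finset.Ico 1 K, a i ^ 2 ≤ a (i + 1) ^ 2)
    (hc : ∀ i ∈ Finset.Icc 1 K, c i = Real.sqrt (a i ^ 2 - a (i - 1) ^ 2))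
    (i : ℕ) (h1 : 1 ≤ i) (h2 : i ≤ K) : c i ^ 2 = a i ^ 2 - a (i-1) ^ 2 := by
  have hle : a (i-1) ^ 2 ≤ a i ^ 2 := by
    rcases Nat.eq_or_lt_of_le h1 with h | h
    · simp [← h, ha0]; exact sq_nonneg _
    · have := hmono (i-1) (by simp [Finset.mem_Ico]; omega)
      have hi : i - 1 + 1 = i := by omega
      rwa [hi] at this
  rw [hc i (by simp [Finset.mem_Icc]; omega), Real.sq_sqrt (by linarith)]

lemma gtelescope (ha0 : a 0 = 0)
    (hmono : ∀ i ∈ Finset.Ico 1 K, a i ^ 2 ≤ a (i + 1) ^ 2)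
    (hc : ∀ i ∈ Finset.Icc 1 K, c i = Real.sqrt (a i ^ 2 - a (i - 1) ^ 2)) :
    ∀ m, m ≤ K → ∑ t ∈ Finset.Icc 1 m, c t ^ 2 = a m ^ 2 := by
  intro m
  induction m with
  | zero => intro _; simp [ha0]
  | succ m ih =>
    intro h
    rw [genie_Icc_succ 1 m (by omega), Finset.sum_insert (by simp),
      ih (by omega), gc2 K a c ha0 hmono hc (m+1) (by omega) h]
    simp
end scalar
section scalar2
variable (K : ℕ) (a b c S : ℕ → ℝ)

lemma gRho_eq (ha0 : a 0 = 0)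
    (hmono : ∀ i ∈ Finset.Ico 1 K, a i ^ 2 ≤ a (i + 1) ^ 2)
    (hc : ∀ i ∈ Finset.Icc 1 K, c i = Real.sqrt (a i ^ 2 - a (i - 1) ^ 2))
    (hS : ∀ i, S i = ∑ j ∈ Finset.Icc i K, b j ^ 2)
    (m : ℕ) (h1 : 1 ≤ m) (h2 : m ≤ K) :
    1 + c m ^ 2 * gLam a S m = gRho a S m := by
  have hD := gDm_pos K a b S hS m
  rw [gc2 K a c ha0 hmono hc m h1 h2]
  unfold gLam gRho gDm at *
  field_simp
  ring

lemma gE_rec (ha0 : a 0 = 0)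
    (hmono : ∀ i ∈ Finset.Ico 1 K, a i ^ 2 ≤ a (i + 1) ^ 2)
    (hc : ∀ i ∈ Finset.Icc 1 K, c i = Real.sqrt (a i ^ 2 - a (i - 1) ^ 2))
    (hS : ∀ i, S i = ∑ j ∈ Finset.Icc i K, b j ^ 2) :
    ∀ n j, j + 1 + n ≤ K →
      gE a S j (j + 1 + n) =
        a j ^ 2 + ∑ t ∈ Finset.Icc (j+1) (j+n), c t ^ 2 * (gLam a S t * gE a S j t) := by
  intro n
  induction n with
  | zero =>
    intro j _
    have he : Finset.Icc (j+1) j = (∅ : Finset ℕ) := Finset.Icc_eq_empty (by omega)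
    simp only [gE, Nat.add_zero, show j + 1 - 1 = j from by omega, he]
    simp
  | succ n ih =>
    intro j h
    have hE1 : gE a S j (j + 1 + (n+1)) = gE a S j (j + 1 + n) * gRho a S (j+1+n) := by
      simp only [gE]
      rw [show j + 1 + (n+1) - 1 = j + n + 1 from by omega,
        show j + 1 + n - 1 = j + n from by omega,
        genie_Icc_succ (j+1) (j+n) (by omega),
        Finset.prod_insert (by simp),
        show j + n + 1 = j + 1 + n from by omega]
      ring
    rw [hE1, show j + (n+1) = (j + n) + 1 from by omega,
      genie_Icc_succ (j+1) (j+n) (by omega),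
      Finset.sum_insert (by simp)]
    rw [show j + n + 1 = j + 1 + n from by omega, ih j (by omega),
      ← gRho_eq K a b c S ha0 hmono hc hS (j+1+n) (by omega) (by omega)]
    ring

lemma gD_star (ha0 : a 0 = 0)
    (hmono : ∀ i ∈ Finset.Ico 1 K, a i ^ 2 ≤ a (i + 1) ^ 2)
    (hc : ∀ i ∈ Finset.Icc 1 K, c i = Real.sqrt (a i ^ 2 - a (i - 1) ^ 2))
    (hS : ∀ i, S i = ∑ j ∈ Finset.Icc i K, b j ^ 2)
    (m j : ℕ) (h1 : 1 ≤ m) (h2 : m ≤ K) (hj : 1 ≤ j) :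
    gD a S m j = gLam a S m * (∑ t ∈ Finset.Icc 1 (m-1), c t ^ 2 * gD a S t j)
      + (if m ≤ j then 1 / gDm a S m else 0) := by
  have hD := gDm_pos K a b S hS m
  by_cases hmj : m ≤ j
  · rw [if_pos hmj]
    have hsum : ∑ t ∈ Finset.Icc 1 (m-1), c t ^ 2 * gD a S t j
        = ∑ t ∈ Finset.Icc 1 (m-1), c t ^ 2 := by
      refine Finset.sum_congr rfl (fun t ht => ?_)
      simp only [Finset.mem_Icc] at ht
      rw [gD, if_pos (by omega)]
      ring
    rw [hsum, gtelescope K a c ha0 hmono hc (m-1) (by omega)]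
    rw [gD, if_pos hmj]
    unfold gLam gDm at *
    have hD' : S (m) * a (m-1) ^ 2 + 1 ≠ 0 := by rw [mul_comm]; exact hD.ne'
    field_simp
  · rw [if_neg hmj]
    push_neg at hmj
    -- split the sum
    have hsplit : ∑ t ∈ Finset.Icc 1 (m-1), c t ^ 2 * gD a S t j
        = (∑ t ∈ Finset.Icc 1 j, c t ^ 2 * gD a S t j)
          + ∑ t ∈ Finset.Icc (j+1) (m-1), c t ^ 2 * gD a S t j := by
      have hu : Finset.Icc 1 (m-1) = Finset.Icc 1 j ∪ Finset.Icc (j+1) (m-1) := by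
        ext x; simp only [Finset.mem_Icc, Finset.mem_union]; omega
      rw [hu, Finset.sum_union (by
        rw [Finset.disjoint_left]
        intro x hx1 hx2
        simp only [Finset.mem_Icc] at hx1 hx2
        omega)]
    have hsum1 : ∑ t ∈ Finset.Icc 1 j, c t ^ 2 * gD a S t j = a j ^ 2 := by
      have : ∑ t ∈ Finset.Icc 1 j, c t ^ 2 * gD a S t j
          = ∑ t ∈ Finset.Icc 1 j, c t ^ 2 := by
        refine Finset.sum_congr rfl (fun t ht => ?_)
        simp only [Finset.mem_Icc] at ht
        rw [gD, if_pos (by omega)]; ring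
      rw [this, gtelescope K a c ha0 hmono hc j (by omega)]
    have hsum2 : ∑ t ∈ Finset.Icc (j+1) (m-1), c t ^ 2 * gD a S t j
        = ∑ t ∈ Finset.Icc (j+1) (m-1), c t ^ 2 * (gLam a S t * gE a S j t) := by
      refine Finset.sum_congr rfl (fun t ht => ?_)
      simp only [Finset.mem_Icc] at ht
      rw [gD, if_neg (by omega)]
    have hrec := gE_rec K a b c S ha0 hmono hc hS (m-1-j) j (by omega)
    rw [show j + 1 + (m-1-j) = m from by omega, show j + (m-1-j) = m - 1 from by omega] at hrec
    rw [gD, if_neg (by omega), hsplit, hsum1, hsum2, hrec]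
    ring
end scalar2
noncomputable def gN (a c S : ℕ → ℝ) (K : ℕ) : Matrix (Fin K) (Fin K) ℝ :=
  Matrix.of fun m t => if (m:ℕ) = (t:ℕ) then 1
    else if (t:ℕ) < (m:ℕ) then -(c ((m:ℕ)+1) * gLam a S ((m:ℕ)+1) * c ((t:ℕ)+1)) else 0

noncomputable def gR (a b c S : ℕ → ℝ) (K : ℕ) : Matrix (Fin K) (Fin K) ℝ :=
  Matrix.of fun m j => if (m:ℕ) ≤ (j:ℕ)
    then c ((m:ℕ)+1) * b ((j:ℕ)+1) / gDm a S ((m:ℕ)+1) else 0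

section mat
variable {K : ℕ} (a b c S : ℕ → ℝ)

lemma gNG (ha0 : a 0 = 0)
    (hmono : ∀ i ∈ Finset.Ico 1 K, a i ^ 2 ≤ a (i + 1) ^ 2)
    (hc : ∀ i ∈ Finset.Icc 1 K, c i = Real.sqrt (a i ^ 2 - a (i - 1) ^ 2))
    (hS : ∀ i, S i = ∑ j ∈ Finset.Icc i K, b j ^ 2)
    (G : Matrix (Fin K) (Fin K) ℝ)
    (hG : ∀ i j : Fin K, G i j = c (i.val + 1) * b (j.val + 1) * gD a S (i.val + 1) (j.val + 1)) :
    gN a c S K * G = gR a b c S K := by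
  ext m j
  rw [Matrix.mul_apply]
  simp only [hG, gN, Matrix.of_apply]
  rw [Fin.sum_univ_eq_sum_range (fun T =>
      (if (m:ℕ) = T then 1 else if T < (m:ℕ) then
        -(c ((m:ℕ)+1) * gLam a S ((m:ℕ)+1) * c (T+1)) else 0)
      * (c (T + 1) * b ((j:ℕ) + 1) * gD a S (T + 1) ((j:ℕ) + 1))) K]
  rw [← Finset.sum_subset (Finset.range_subset_range.mpr (show (m:ℕ)+1 ≤ K from m.isLt))
      (by
        intro x hx hnx
        simp only [Finset.mem_range] at hx hnx
        rw [if_neg (by omega), if_neg (by omega)]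
        ring)]
  rw [Finset.sum_range_succ, if_pos rfl]
  have hrest : ∑ t ∈ Finset.range (m:ℕ),
      ((if (m:ℕ) = t then 1 else if t < (m:ℕ) then
        -(c ((m:ℕ)+1) * gLam a S ((m:ℕ)+1) * c (t+1)) else 0)
      * (c (t + 1) * b ((j:ℕ) + 1) * gD a S (t + 1) ((j:ℕ) + 1)))
      = -(c ((m:ℕ)+1) * gLam a S ((m:ℕ)+1) * b ((j:ℕ)+1)) *
        ∑ t ∈ Finset.Icc 1 (m:ℕ), c t ^ 2 * gD a S t ((j:ℕ)+1) := by
    rw [← genie_sum_shift (fun t => c t ^ 2 * gD a S t ((j:ℕ)+1)) 0 (m:ℕ),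
      ← Finset.range_eq_Ico, Finset.mul_sum]
    refine Finset.sum_congr rfl (fun t ht => ?_)
    simp only [Finset.mem_range] at ht
    rw [if_neg (by omega), if_pos ht]
    ring
  rw [hrest]
  have hstar := gD_star K a b c S ha0 hmono hc hS ((m:ℕ)+1) ((j:ℕ)+1)
    (by omega) m.isLt (by omega)
  rw [show (m:ℕ)+1-1 = (m:ℕ) from by omega] at hstar
  rw [hstar]
  simp only [gR, Matrix.of_apply]
  by_cases hmj : (m:ℕ) ≤ (j:ℕ)
  · rw [if_pos (by omega : (m:ℕ)+1 ≤ (j:ℕ)+1), if_pos hmj]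
    field_simp
    ring
  · rw [if_neg (by omega : ¬ (m:ℕ)+1 ≤ (j:ℕ)+1), if_neg hmj]
    ring
end mat
noncomputable def gDg (a c S : ℕ → ℝ) (K : ℕ) : Matrix (Fin K) (Fin K) ℝ :=
  Matrix.diagonal fun m : Fin K =>
    1 + c ((m:ℕ)+1)^2 * S ((m:ℕ)+1) / gDm a S ((m:ℕ)+1)

section mat2
variable {K : ℕ} (a b c S : ℕ → ℝ)

-- the R*Rᵀ entry
lemma gRR (hS : ∀ i, S i = ∑ j ∈ Finset.Icc i K, b j ^ 2) (p q : Fin K) (hqp : (q:ℕ) ≤ (p:ℕ)) :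
    ∑ j : Fin K, gR a b c S K p j * gR a b c S K q j
      = c ((p:ℕ)+1) * c ((q:ℕ)+1) * S ((p:ℕ)+1) /
          (gDm a S ((p:ℕ)+1) * gDm a S ((q:ℕ)+1)) := by
  simp only [gR, Matrix.of_apply]
  rw [Fin.sum_univ_eq_sum_range (fun J =>
    (if (p:ℕ) ≤ J then c ((p:ℕ)+1) * b (J+1) / gDm a S ((p:ℕ)+1) else 0)
    * (if (q:ℕ) ≤ J then c ((q:ℕ)+1) * b (J+1) / gDm a S ((q:ℕ)+1) else 0)) K]
  have h1 : ∀ J ∈ Finset.range K,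
      (if (p:ℕ) ≤ J then c ((p:ℕ)+1) * b (J+1) / gDm a S ((p:ℕ)+1) else 0)
      * (if (q:ℕ) ≤ J then c ((q:ℕ)+1) * b (J+1) / gDm a S ((q:ℕ)+1) else 0)
      = if (p:ℕ) ≤ J then
          c ((p:ℕ)+1) * c ((q:ℕ)+1) / (gDm a S ((p:ℕ)+1) * gDm a S ((q:ℕ)+1)) * b (J+1)^2
        else 0 := by
    intro J _
    by_cases h : (p:ℕ) ≤ J
    · rw [if_pos h, if_pos (by omega), if_pos h]; ring
    · rw [if_neg h, if_neg h]; ring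
  rw [Finset.sum_congr rfl h1]
  rw [Finset.range_eq_Ico]
  rw [← Finset.sum_subset (show Finset.Ico (p:ℕ) K ⊆ Finset.Ico 0 K from
      Finset.Ico_subset_Ico (Nat.zero_le _) le_rfl)
      (by
        intro x hx hnx
        simp only [Finset.mem_Ico] at hx hnx
        rw [if_neg (by omega)])]
  rw [Finset.sum_congr rfl (fun x hx => by
    simp only [Finset.mem_Ico] at hx
    rw [if_pos hx.1])]
  rw [← Finset.mul_sum, genie_sum_shift (fun j => b j ^ 2) (p:ℕ) K, ← hS ((p:ℕ)+1)]
  ring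

lemma gDiag (ha0 : a 0 = 0)
    (hmono : ∀ i ∈ Finset.Ico 1 K, a i ^ 2 ≤ a (i + 1) ^ 2)
    (hc : ∀ i ∈ Finset.Icc 1 K, c i = Real.sqrt (a i ^ 2 - a (i - 1) ^ 2))
    (hS : ∀ i, S i = ∑ j ∈ Finset.Icc i K, b j ^ 2) :
    gN a c S K * (gN a c S K)ᵀ + gR a b c S K * (gR a b c S K)ᵀ = gDg a c S K := by
  have hNsum : ∀ p q : Fin K, (q:ℕ) ≤ (p:ℕ) →
      ∑ t : Fin K, gN a c S K p t * gN a c S K q t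
        = (if (p:ℕ) = (q:ℕ) then 1 else
            -(c ((p:ℕ)+1) * gLam a S ((p:ℕ)+1) * c ((q:ℕ)+1)))
          + (c ((p:ℕ)+1) * gLam a S ((p:ℕ)+1)) * (c ((q:ℕ)+1) * gLam a S ((q:ℕ)+1))
            * a (q:ℕ) ^ 2 := by
    intro p q hqp
    simp only [gN, Matrix.of_apply]
    rw [Fin.sum_univ_eq_sum_range (fun T =>
      (if (p:ℕ) = T then 1 else if T < (p:ℕ) then
        -(c ((p:ℕ)+1) * gLam a S ((p:ℕ)+1) * c (T+1)) else 0)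
      * (if (q:ℕ) = T then 1 else if T < (q:ℕ) then
        -(c ((q:ℕ)+1) * gLam a S ((q:ℕ)+1) * c (T+1)) else 0)) K]
    rw [← Finset.sum_subset (Finset.range_subset_range.mpr (show (q:ℕ)+1 ≤ K from q.isLt))
        (by
          intro x hx hnx
          simp only [Finset.mem_range] at hx hnx
          have h2 : (if (q:ℕ) = x then (1:ℝ) else if x < (q:ℕ) then
              -(c ((q:ℕ)+1) * gLam a S ((q:ℕ)+1) * c (x+1)) else 0) = 0 := by
            rw [if_neg (by omega), if_neg (by omega)]
          rw [h2, mul_zero])]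
    rw [Finset.sum_range_succ, if_pos rfl]
    have hq : (if (p:ℕ) = (q:ℕ) then (1:ℝ) else if (q:ℕ) < (p:ℕ) then
        -(c ((p:ℕ)+1) * gLam a S ((p:ℕ)+1) * c ((q:ℕ)+1)) else 0)
        = if (p:ℕ) = (q:ℕ) then 1 else
            -(c ((p:ℕ)+1) * gLam a S ((p:ℕ)+1) * c ((q:ℕ)+1)) := by
      by_cases h : (p:ℕ) = (q:ℕ)
      · rw [if_pos h, if_pos h]
      · rw [if_neg h, if_neg h, if_pos (by omega)]
    have hrest : ∑ t ∈ Finset.range (q:ℕ),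
        ((if (p:ℕ) = t then 1 else if t < (p:ℕ) then
          -(c ((p:ℕ)+1) * gLam a S ((p:ℕ)+1) * c (t+1)) else 0)
        * (if (q:ℕ) = t then 1 else if t < (q:ℕ) then
          -(c ((q:ℕ)+1) * gLam a S ((q:ℕ)+1) * c (t+1)) else 0))
        = (c ((p:ℕ)+1) * gLam a S ((p:ℕ)+1)) * (c ((q:ℕ)+1) * gLam a S ((q:ℕ)+1))
            * ∑ t ∈ Finset.Icc 1 (q:ℕ), c t ^ 2 := by
      rw [← genie_sum_shift (fun t => c t ^ 2) 0 (q:ℕ), ← Finset.range_eq_Ico,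
        Finset.mul_sum]
      refine Finset.sum_congr rfl (fun t ht => ?_)
      simp only [Finset.mem_range] at ht
      rw [if_neg (by omega), if_pos (by omega), if_neg (by omega), if_pos ht]
      ring
    rw [hrest, gtelescope K a c ha0 hmono hc (q:ℕ) (by omega), hq]
    ring
  ext m k
  simp only [Matrix.add_apply, Matrix.mul_apply, Matrix.transpose_apply]
  rcases lt_trichotomy ((m:ℕ)) ((k:ℕ)) with h | h | h
  · -- m < k : symmetric case
    rw [Finset.sum_congr rfl (fun t _ => mul_comm (gN a c S K m t) (gN a c S K k t)),
      Finset.sum_congr rfl (fun t _ => mul_comm (gR a b c S K m t) (gR a b c S K k t)),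
      hNsum k m (by omega), gRR a b c S hS k m (by omega),
      if_neg (by omega : ¬(k:ℕ) = (m:ℕ))]
    have hDk := gDm_pos K a b S hS ((k:ℕ)+1)
    have hDm := gDm_pos K a b S hS ((m:ℕ)+1)
    rw [gDg, Matrix.diagonal_apply_ne _ (by
      intro hmk; exact absurd (congrArg Fin.val hmk) (by omega))]
    simp only [gLam, gDm, Nat.add_sub_cancel] at *
    have hDk' : S ((k:ℕ)+1) * a ((k:ℕ)) ^ 2 + 1 ≠ 0 := by rw [mul_comm]; exact hDk.ne'
    have hDm' : S ((m:ℕ)+1) * a ((m:ℕ)) ^ 2 + 1 ≠ 0 := by rw [mul_comm]; exact hDm.ne'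
    field_simp
    ring
  · -- diagonal
    have hmk : m = k := Fin.ext h
    subst hmk
    rw [hNsum m m le_rfl, gRR a b c S hS m m le_rfl, if_pos rfl, gDg,
      Matrix.diagonal_apply_eq]
    have hDm := gDm_pos K a b S hS ((m:ℕ)+1)
    have ht := gtelescope K a c ha0 hmono hc
    simp only [gLam, gDm, Nat.add_sub_cancel] at *
    have hDm' : S ((m:ℕ)+1) * a ((m:ℕ)) ^ 2 + 1 ≠ 0 := by rw [mul_comm]; exact hDm.ne'
    field_simp
    ring
  · rw [hNsum m k (by omega), gRR a b c S hS m k (by omega),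
      if_neg (by omega : ¬(m:ℕ) = (k:ℕ))]
    have hDk := gDm_pos K a b S hS ((k:ℕ)+1)
    have hDm := gDm_pos K a b S hS ((m:ℕ)+1)
    rw [gDg, Matrix.diagonal_apply_ne _ (by
      intro hmk; exact absurd (congrArg Fin.val hmk) (by omega))]
    simp only [gLam, gDm, Nat.add_sub_cancel] at *
    have hDk' : S ((k:ℕ)+1) * a ((k:ℕ)) ^ 2 + 1 ≠ 0 := by rw [mul_comm]; exact hDk.ne'
    have hDm' : S ((m:ℕ)+1) * a ((m:ℕ)) ^ 2 + 1 ≠ 0 := by rw [mul_comm]; exact hDm.ne'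
    field_simp
    ring
end mat2

/-- Evaluation of the genie-MAC outer bound for the degraded channel: there exist
free parameters `d_{i,j}` (with `d_{i,j} = 1` for `i ≤ j`) such that the matrix
`G = (c_i b_j d_{i,j})` satisfies
`det(I + G Gᵀ) = ∏_{i=1}^K (1 + (a_i² − a_{i−1}²) S_i / (a_{i−1}² S_i + 1))
             = ∏_{i=1}^K (a_i² S_i + 1)/(a_{i−1}² S_i + 1)`. -/
theorem genie_det_evaluation (K : ℕ) (hK : 1 ≤ K)
    (a : ℕ → ℝ) (ha0 : a 0 = 0)
    (hmono : ∀ i ∈ Finset.Ico 1 K, a i ^ 2 ≤ a (i + 1) ^ 2)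
    (c : ℕ → ℝ) (hc : ∀ i ∈ Finset.Icc 1 K, c i = Real.sqrt (a i ^ 2 - a (i - 1) ^ 2))
    (b : ℕ → ℝ)
    (S : ℕ → ℝ) (hS : ∀ i, S i = ∑ j ∈ Finset.Icc i K, b j ^ 2) :
    ∃ d : ℕ → ℕ → ℝ, (∀ i j : ℕ, i ≤ j → d i j = 1) ∧
      ∀ G : Matrix (Fin K) (Fin K) ℝ,
        (∀ i j : Fin K, G i j = c (i.val + 1) * b (j.val + 1) * d (i.val + 1) (j.val + 1)) →
        ((1 + G * Gᵀ).det =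
            ∏ i ∈ Finset.Icc 1 K,
              (1 + (a i ^ 2 - a (i - 1) ^ 2) * S i / (a (i - 1) ^ 2 * S i + 1)) ∧
          (1 + G * Gᵀ).det =
            ∏ i ∈ Finset.Icc 1 K, (a i ^ 2 * S i + 1) / (a (i - 1) ^ 2 * S i + 1)) := by
  refine ⟨gD a S, fun i j h => by rw [gD, if_pos h], ?_⟩
  intro G hG
  have hNG := gNG a b c S ha0 hmono hc hS G hG
  have hDiag := gDiag a b c S ha0 hmono hc hS
  -- factorization
  have hfact : gN a c S K * (1 + G * Gᵀ) * (gN a c S K)ᵀ = gDg a c S K := by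
    have h1 : gN a c S K * (1 + G * Gᵀ) * (gN a c S K)ᵀ
        = gN a c S K * (gN a c S K)ᵀ + (gN a c S K * G) * (gN a c S K * G)ᵀ := by
      rw [Matrix.transpose_mul]
      noncomm_ring
    rw [h1, hNG, hDiag]
  have hdetN : (gN a c S K).det = 1 := by
    rw [Matrix.det_of_lowerTriangular (gN a c S K) (by
      intro i j hij
      have : (i:ℕ) < (j:ℕ) := hij
      simp only [gN, Matrix.of_apply]
      rw [if_neg (by omega), if_neg (by omega)])]
    refine Finset.prod_eq_one (fun i _ => ?_)
    simp [gN]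
  have hdet : (1 + G * Gᵀ).det
      = ∏ m : Fin K, (1 + c ((m:ℕ)+1)^2 * S ((m:ℕ)+1) / gDm a S ((m:ℕ)+1)) := by
    have := congrArg Matrix.det hfact
    rw [Matrix.det_mul, Matrix.det_mul, Matrix.det_transpose, hdetN, one_mul, mul_one,
      gDg, Matrix.det_diagonal] at this
    exact this
  have hprod : (1 + G * Gᵀ).det
      = ∏ i ∈ Finset.Icc 1 K, (1 + c i ^ 2 * S i / gDm a S i) := by
    rw [hdet, ← genie_prod_shift (fun i => 1 + c i ^ 2 * S i / gDm a S i) K,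
      ← Fin.prod_univ_eq_prod_range (fun i => 1 + c (i+1) ^ 2 * S (i+1) / gDm a S (i+1)) K]
  constructor
  · rw [hprod]
    refine Finset.prod_congr rfl (fun i hi => ?_)
    simp only [Finset.mem_Icc] at hi
    rw [gc2 K a c ha0 hmono hc i hi.1 hi.2]
    rfl
  · rw [hprod]
    refine Finset.prod_congr rfl (fun i hi => ?_)
    simp only [Finset.mem_Icc] at hi
    rw [gc2 K a c ha0 hmono hc i hi.1 hi.2]
    have hD := gDm_pos K a b S hS i
    simp only [gDm] at *
    field_simp
    ring
end

section
/- Let K ≥ 1, let a_1, …, a_K be real numbers with 0 < a_1 ≤ a_2 ≤ … ≤ a_K, set a_0 = 0, let b_1, …, b_K be real numbers, and set S_i = Σ_{j=i}^K b_j². Then there exist K×K real matrices G and T = [t_1 … t_K] such that: (i) (TᵀG)_{i,j} = a_i·b_j for all i ≤ j; (ii) t_iᵀ t_i ≤ 1 for all i; and (iii) (1/2)·log det(I + G·Gᵀ) = (1/2)·Σ_{i=1}^K log(1 + (a_i² − a_{i-1}²)·S_i / (a_{i-1}²·S_i + 1)). Consequently, the infimum of (1/2)·log det(I + G·Gᵀ)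 over all pairs (G, T) satisfying (i) and (ii) is at most (1/2)·Σ_{i=1}^K log(1 + (a_i² − a_{i-1}²)·S_i / (a_{i-1}²·S_i + 1)). -/
open Finset Matrix

namespace DegradedSIC

noncomputable def vv (a S : ℕ → ℝ) (m : ℕ) : ℝ := a (m-1)^2 * S m + 1
noncomputable def uu (a S : ℕ → ℝ) (m : ℕ) : ℝ := a m^2 * S m + 1
noncomputable def dd (a S : ℕ → ℝ) (m : ℕ) : ℝ := uu a S m / vv a S m
noncomputable def pp (a S : ℕ → ℝ) (j m : ℕ) : ℝ := ∏ l ∈ Finset.Ico (j+1) m, dd a S l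
noncomputable def gg (a b S : ℕ → ℝ) (j n : ℕ) : ℝ :=
  if n ≤ j then b j else b j * a j^2 * S n / vv a S n * pp a S j n
noncomputable def CC (a b S : ℕ → ℝ) (m n : ℕ) : ℝ :=
  ∑ j ∈ Finset.Ico 1 m, b j * a j^2 * pp a S j m * gg a b S j n
noncomputable def RR (K : ℕ) (a b S : ℕ → ℝ) (m n : ℕ) : ℝ :=
  ∑ j ∈ Finset.Icc 1 K, gg a b S j m * gg a b S j n
noncomputable def TT (K : ℕ) (a b S : ℕ → ℝ) (m n : ℕ) : ℝ :=
  1 + ∑ k ∈ Finset.Ico 1 m, (a k^2 - a (k-1)^2) * RR K a b S k n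

variable {K : ℕ} {a b S : ℕ → ℝ}

lemma vv_pos (hSnn : ∀ m, 0 ≤ S m) (m : ℕ) : 0 < vv a S m := by
  have := hSnn m; unfold vv; positivity

lemma uu_pos (hSnn : ∀ m, 0 ≤ S m) (m : ℕ) : 0 < uu a S m := by
  have := hSnn m; unfold uu; positivity

lemma dd_pos (hSnn : ∀ m, 0 ≤ S m) (m : ℕ) : 0 < dd a S m :=
  div_pos (uu_pos hSnn m) (vv_pos hSnn m)

lemma tele (ha0 : a 0 = 0) (m : ℕ) :
    ∑ k ∈ Finset.Ico 1 m, (a k^2 - a (k-1)^2) = a (m-1)^2 := by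
  rcases m with _ | m'
  · simp [ha0]
  · rw [Finset.sum_Ico_eq_sum_range]
    simp only [Nat.add_sub_cancel]
    have : ∀ i ∈ Finset.range m', a (1+i)^2 - a (1+i-1)^2 = a (i+1)^2 - a i^2 := by
      intro i _
      rw [Nat.add_comm 1 i, Nat.add_sub_cancel]
    rw [Finset.sum_congr rfl this, Finset.sum_range_sub (fun i => a i ^ 2), ha0]
    ring

lemma tele_p (j : ℕ) : ∀ m, j + 1 ≤ m →
    pp a S j m = 1 + ∑ k ∈ Finset.Ico (j+1) m, (dd a S k - 1) * pp a S j k := by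
  intro m h
  induction m, h using Nat.le_induction with
  | base => simp [pp]
  | succ m hm ih =>
    rw [pp, Finset.prod_Ico_succ_top hm, Finset.sum_Ico_succ_top hm, ← pp]
    linear_combination ih

lemma clubs (ha0 : a 0 = 0) (hSnn : ∀ m, 0 ≤ S m) (j m : ℕ) (h1 : 1 ≤ j) (hjm : j < m) :
    ∑ k ∈ Finset.Ico 1 m, (a k^2 - a (k-1)^2) * gg a b S j k
      = b j * a j^2 * pp a S j m := by
  have hsplit := Finset.sum_Ico_consecutive (fun k => (a k^2 - a (k-1)^2) * gg a b S j k)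
    (show 1 ≤ j+1 by omega) (show j+1 ≤ m by omega)
  rw [← hsplit]
  have h1' : ∑ k ∈ Finset.Ico 1 (j+1), (a k^2 - a (k-1)^2) * gg a b S j k
      = b j * a j^2 := by
    have : ∀ k ∈ Finset.Ico 1 (j+1), (a k^2 - a (k-1)^2) * gg a b S j k
        = (a k^2 - a (k-1)^2) * b j := by
      intro k hk
      rw [Finset.mem_Ico] at hk
      rw [gg, if_pos (by omega)]
    rw [Finset.sum_congr rfl this, ← Finset.sum_mul, tele ha0]
    have : j + 1 - 1 = j := by omega
    rw [this]; ring
  have h2' : ∑ k ∈ Finset.Ico (j+1) m, (a k^2 - a (k-1)^2) * gg a b S j k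
      = b j * a j^2 * ∑ k ∈ Finset.Ico (j+1) m, (dd a S k - 1) * pp a S j k := by
    rw [Finset.mul_sum]
    apply Finset.sum_congr rfl
    intro k hk
    rw [Finset.mem_Ico] at hk
    rw [gg, if_neg (by omega)]
    have hvne : vv a S k ≠ 0 := ne_of_gt (vv_pos hSnn k)
    have hdk : dd a S k - 1 = (a k^2 - a (k-1)^2) * S k / vv a S k := by
      rw [dd, uu]
      field_simp
      unfold vv
      ring
    rw [hdk]
    field_simp
  rw [h1', h2', tele_p j m (by omega)]
  ring

lemma Rsymm (m n : ℕ) : RR K a b S m n = RR K a b S n m :=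
  Finset.sum_congr rfl fun j _ => mul_comm _ _

lemma decomp (hS : ∀ i, S i = ∑ j ∈ Finset.Icc i K, b j ^ 2) (hSnn : ∀ m, 0 ≤ S m)
    (m n : ℕ) (h1 : 1 ≤ n) (hnm : n ≤ m) (hmK : m ≤ K) :
    RR K a b S m n = S m + S m / vv a S m * CC a b S m n := by
  have h1m : 1 ≤ m := h1.trans hnm
  rw [RR, ← Finset.Ico_add_one_right_eq_Icc,
    ← Finset.sum_Ico_consecutive _ (show 1 ≤ m by omega) (show m ≤ K+1 by omega)]
  have hupper : ∑ j ∈ Finset.Ico m (K+1), gg a b S j m * gg a b S j n = S m := by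
    have : ∀ j ∈ Finset.Ico m (K+1), gg a b S j m * gg a b S j n = b j ^ 2 := by
      intro j hj
      rw [Finset.mem_Ico] at hj
      rw [gg, if_pos (by omega), gg, if_pos (by omega)]
      ring
    rw [Finset.sum_congr rfl this, Finset.Ico_add_one_right_eq_Icc, ← hS m]
  have hlower : ∑ j ∈ Finset.Ico 1 m, gg a b S j m * gg a b S j n
      = S m / vv a S m * CC a b S m n := by
    rw [CC, Finset.mul_sum]
    apply Finset.sum_congr rfl
    intro j hj
    rw [Finset.mem_Ico] at hj
    rw [gg, if_neg (by omega)]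
    ring
  rw [hupper, hlower]
  ring

lemma diag (ha0 : a 0 = 0) (hS : ∀ i, S i = ∑ j ∈ Finset.Icc i K, b j ^ 2)
    (hSnn : ∀ m, 0 ≤ S m) (m : ℕ) (hm1 : 1 ≤ m) (hmK : m ≤ K) :
    vv a S m + CC a b S m m = TT K a b S m m := by
  have hRk : ∀ k ∈ Finset.Ico 1 m, (a k^2 - a (k-1)^2) * RR K a b S k m
      = (a k^2 - a (k-1)^2) * S m
        + S m / vv a S m * ((a k^2 - a (k-1)^2) * CC a b S m k) := by
    intro k hk
    rw [Finset.mem_Ico] at hk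
    rw [Rsymm, decomp hS hSnn m k hk.1 (by omega) hmK]
    ring
  rw [TT, Finset.sum_congr rfl hRk, Finset.sum_add_distrib, ← Finset.sum_mul,
    ← Finset.mul_sum, tele ha0]
  have hswap : ∑ k ∈ Finset.Ico 1 m, (a k^2 - a (k-1)^2) * CC a b S m k
      = ∑ j ∈ Finset.Ico 1 m, (b j * a j^2 * pp a S j m)^2 := by
    simp only [CC, Finset.mul_sum]
    rw [Finset.sum_comm]
    apply Finset.sum_congr rfl
    intro j hj
    rw [Finset.mem_Ico] at hj
    have : ∀ k ∈ Finset.Ico 1 m, (a k^2 - a (k-1)^2) * (b j * a j^2 * pp a S j m * gg a b S j k)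
        = (b j * a j^2 * pp a S j m) * ((a k^2 - a (k-1)^2) * gg a b S j k) := by
      intro k _; ring
    rw [Finset.sum_congr rfl this, ← Finset.mul_sum, clubs ha0 hSnn j m hj.1 hj.2]
    ring
  rw [hswap]
  have hCCmm : CC a b S m m = S m / vv a S m * ∑ j ∈ Finset.Ico 1 m, (b j * a j^2 * pp a S j m)^2 := by
    rw [CC, Finset.mul_sum]
    apply Finset.sum_congr rfl
    intro j hj
    rw [Finset.mem_Ico] at hj
    rw [gg, if_neg (by omega)]
    ring
  rw [hCCmm, vv]
  ring

lemma starstar (ha0 : a 0 = 0) (hS : ∀ i, S i = ∑ j ∈ Finset.Icc i K, b j ^ 2)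
    (hSnn : ∀ m, 0 ≤ S m) :
    ∀ m, 1 ≤ m → m ≤ K → ∀ n, 1 ≤ n → n ≤ m →
      vv a S m + CC a b S m n = TT K a b S m n := by
  intro m
  induction m with
  | zero => omega
  | succ m ih =>
    intro hm1 hmK n hn1 hnm
    rcases Nat.eq_or_lt_of_le hnm with heq | hlt
    · rw [heq]; exact diag ha0 hS hSnn (m+1) hm1 hmK
    · have hnle : n ≤ m := by omega
      have hm1' : 1 ≤ m := by omega
      have hmK' : m ≤ K := by omega
      have IH := ih hm1' hmK' n hn1 hnle
      have hTT : TT K a b S (m+1) n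
          = TT K a b S m n + (a m^2 - a (m-1)^2) * RR K a b S m n := by
        rw [TT, TT, Finset.sum_Ico_succ_top hm1']
        ring
      have hRR := decomp (a := a) hS hSnn m n hn1 hnle hmK'
      have hCC : CC a b S (m+1) n = dd a S m * CC a b S m n + b m^2 * a m^2 := by
        rw [CC, CC, Finset.sum_Ico_succ_top hm1']
        have hmain : ∀ j ∈ Finset.Ico 1 m, b j * a j^2 * pp a S j (m+1) * gg a b S j n
            = dd a S m * (b j * a j^2 * pp a S j m * gg a b S j n) := by
          intro j hj
          rw [Finset.mem_Ico] at hj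
          rw [pp, Finset.prod_Ico_succ_top (by omega), ← pp]
          ring
        rw [Finset.sum_congr rfl hmain, ← Finset.mul_sum]
        have hpm : pp a S m (m+1) = 1 := by rw [pp, Finset.Ico_self, Finset.prod_empty]
        rw [hpm, gg, if_pos hnle]
        ring
      have hSrec : S m = b m^2 + S (m+1) := by
        rw [hS m, hS (m+1)]
        have : Finset.Icc m K = insert m (Finset.Icc (m+1) K) := by
          rw [Finset.Icc_add_one_left_eq_Ioc, Finset.Ioc_insert_left hmK']
        rw [this, Finset.sum_insert (by simp)]
      rw [hTT, hCC, hRR, ← IH, dd, uu]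
      have hv0 : (0:ℝ) < vv a S m := vv_pos hSnn m
      have hvm : vv a S m = a (m-1)^2 * (b m^2 + S (m+1)) + 1 := by
        rw [vv, ← hSrec]
      have hv1 : vv a S (m+1) = a m ^2 * S (m+1) + 1 := by
        rw [vv]; simp
      rw [hv1, hvm, hSrec]
      have hne : a (m-1)^2 * (b m^2 + S (m+1)) + 1 ≠ 0 := by rw [← hvm]; positivity
      have hne' : (b m^2 + S (m+1)) * a (m-1)^2 + 1 ≠ 0 := by rw [mul_comm]; exact hne
      field_simp
      ring

lemma star (ha0 : a 0 = 0) (hS : ∀ i, S i = ∑ j ∈ Finset.Icc i K, b j ^ 2)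
    (hSnn : ∀ m, 0 ≤ S m) (m n : ℕ) (hn1 : 1 ≤ n) (hnm : n ≤ m) (hmK : m ≤ K) :
    vv a S m * RR K a b S m n = S m * TT K a b S m n := by
  rw [decomp hS hSnn m n hn1 hnm hmK, ← starstar ha0 hS hSnn m (hn1.trans hnm) hmK n hn1 hnm]
  have hvne : vv a S m ≠ 0 := ne_of_gt (vv_pos hSnn m)
  field_simp

lemma sum_fin_le {K : ℕ} (t : ℕ) (ht : t < K) (F : ℕ → ℝ) :
    (∑ k : Fin K, if (k:ℕ) ≤ t then F (k:ℕ) else 0) = ∑ r ∈ Finset.range (t+1), F r := by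
  rw [Fin.sum_univ_eq_sum_range (fun k => if k ≤ t then F k else 0) K]
  rw [← Finset.sum_subset (Finset.range_subset_range.mpr (show t+1 ≤ K by omega))
      (fun x _ hx => by
        rw [if_neg]
        simp only [Finset.mem_range] at hx
        omega)]
  exact Finset.sum_congr rfl fun x hx => if_pos (by
    simp only [Finset.mem_range] at hx; omega)

lemma sum_fin_lt {K : ℕ} (t : ℕ) (ht : t ≤ K) (F : ℕ → ℝ) :
    (∑ k : Fin K, if (k:ℕ) < t then F (k:ℕ) else 0) = ∑ r ∈ Finset.range t, F r := by
  rw [Fin.sum_univ_eq_sum_range (fun k => if k < t then F k else 0) K]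
  rw [← Finset.sum_subset (Finset.range_subset_range.mpr ht)
      (fun x _ hx => by
        rw [if_neg]
        simp only [Finset.mem_range] at hx
        omega)]
  exact Finset.sum_congr rfl fun x hx => if_pos (by
    simp only [Finset.mem_range] at hx; omega)

lemma sum_fin_succ_eq_Icc {K : ℕ} (F : ℕ → ℝ) :
    (∑ j : Fin K, F ((j:ℕ)+1)) = ∑ j ∈ Finset.Icc 1 K, F j := by
  rw [← Finset.Ico_add_one_right_eq_Icc, Finset.sum_Ico_eq_sum_range]
  try simp only [Nat.add_sub_cancel]
  rw [Fin.sum_univ_eq_sum_range (fun j => F (j+1)) K]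
  exact Finset.sum_congr rfl fun x _ => by rw [Nat.add_comm]

end DegradedSIC

/-- Matrix-analytic core of the sum-capacity theorem for K-user Gaussian degraded
interference channels (normalized `P = N = 1`): there exist matrices `(G, T)`
feasible for the genie-MAC optimization with `H = a bᵀ` — i.e. `(TᵀG)_{i,j} = a_i b_j`
for `i ≤ j` and columns of `T` of squared norm at most `1` — whose objective value
`(1/2) log det(I + G Gᵀ)` equals the SIC sum rate
`(1/2) ∑_{i=1}^K log (1 + (a_i² − a_{i−1}²) S_i / (a_{i−1}² S_i + 1))`; consequently
the infimum of the genie-MAC objective is at most this value. -/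
theorem degraded_outer_bound_matches_sic (K : ℕ) (hK : 1 ≤ K)
    (a : ℕ → ℝ) (ha0 : a 0 = 0) (hpos : 0 < a 1)
    (hmono : ∀ i ∈ Finset.Ico 1 K, a i ≤ a (i + 1))
    (b : ℕ → ℝ)
    (S : ℕ → ℝ) (hS : ∀ i, S i = ∑ j ∈ Finset.Icc i K, b j ^ 2) :
    (∃ G T : Matrix (Fin K) (Fin K) ℝ,
        (∀ i j : Fin K, i ≤ j → (Tᵀ * G) i j = a (i.val + 1) * b (j.val + 1)) ∧
        (∀ i : Fin K, (∑ j : Fin K, T j i * T j i) ≤ 1) ∧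
        (1 / 2 : ℝ) * Real.log ((1 + G * Gᵀ).det) =
          (1 / 2 : ℝ) * ∑ i ∈ Finset.Icc 1 K,
            Real.log (1 + (a i ^ 2 - a (i - 1) ^ 2) * S i / (a (i - 1) ^ 2 * S i + 1))) ∧
      sInf {x : ℝ | ∃ G T : Matrix (Fin K) (Fin K) ℝ,
          (∀ i j : Fin K, i ≤ j → (Tᵀ * G) i j = a (i.val + 1) * b (j.val + 1)) ∧
          (∀ i : Fin K, (∑ j : Fin K, T j i * T j i) ≤ 1) ∧
          x = (1 / 2 : ℝ) * Real.log ((1 + G * Gᵀ).det)} ≤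
        (1 / 2 : ℝ) * ∑ i ∈ Finset.Icc 1 K,
          Real.log (1 + (a i ^ 2 - a (i - 1) ^ 2) * S i / (a (i - 1) ^ 2 * S i + 1)) := by
  classical
  have hSnn : ∀ m, 0 ≤ S m := fun m => by
    rw [hS m]; exact Finset.sum_nonneg fun j _ => sq_nonneg _
  have hv : ∀ m, 0 < DegradedSIC.vv a S m := fun m => DegradedSIC.vv_pos hSnn m
  have hvne : ∀ m, DegradedSIC.vv a S m ≠ 0 := fun m => ne_of_gt (hv m)
  have apos : ∀ k, 1 ≤ k → k ≤ K → 0 < a k := by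
    intro k
    induction k with
    | zero => omega
    | succ k ih =>
      intro _ hK'
      rcases Nat.eq_zero_or_pos k with h0 | h1
      · subst h0; exact hpos
      · have hk : k ∈ Finset.Ico 1 K := Finset.mem_Ico.mpr ⟨h1, by omega⟩
        exact lt_of_lt_of_le (ih h1 (by omega)) (hmono k hk)
  have enn : ∀ k, 1 ≤ k → k ≤ K → 0 ≤ a k ^ 2 - a (k - 1) ^ 2 := by
    intro k h1 hK'
    rcases k with _ | k'
    · omega
    · rcases Nat.eq_zero_or_pos k' with h0 | h1'
      · subst h0
        simp only [Nat.add_sub_cancel, ha0]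
        have : (0:ℝ) ≤ a 1 ^ 2 := sq_nonneg _
        simpa using this
      · have hk : k' ∈ Finset.Ico 1 K := Finset.mem_Ico.mpr ⟨h1', by omega⟩
        have h := hmono k' hk
        have hp := apos k' h1' (by omega)
        simp only [Nat.add_sub_cancel]
        have : a k' ^ 2 ≤ a (k' + 1) ^ 2 := by nlinarith
        linarith
  set c : ℕ → ℝ := fun k => Real.sqrt (a k ^ 2 - a (k - 1) ^ 2) with hcdef
  have hc2 : ∀ k, 1 ≤ k → k ≤ K → (c k) ^ 2 = a k ^ 2 - a (k - 1) ^ 2 := fun k h1 hK' =>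
    Real.sq_sqrt (enn k h1 hK')
  have hsum : ∀ t : ℕ, ∑ r ∈ Finset.range (t + 1), (a (r + 1) ^ 2 - a (r + 1 - 1) ^ 2)
      = a (t + 1) ^ 2 := by
    intro t
    simp only [Nat.add_sub_cancel]
    rw [Finset.sum_range_sub (fun i => a i ^ 2), ha0]
    ring
  have main : ∃ G T : Matrix (Fin K) (Fin K) ℝ,
      (∀ i j : Fin K, i ≤ j → (Tᵀ * G) i j = a (i.val + 1) * b (j.val + 1)) ∧
      (∀ i : Fin K, (∑ j : Fin K, T j i * T j i) ≤ 1) ∧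
      (1 / 2 : ℝ) * Real.log ((1 + G * Gᵀ).det) =
        (1 / 2 : ℝ) * ∑ i ∈ Finset.Icc 1 K,
          Real.log (1 + (a i ^ 2 - a (i - 1) ^ 2) * S i / (a (i - 1) ^ 2 * S i + 1)) := by
    set G : Matrix (Fin K) (Fin K) ℝ :=
      fun m j => c ((m : ℕ) + 1) * DegradedSIC.gg a b S ((j : ℕ) + 1) ((m : ℕ) + 1) with hGdef
    set T : Matrix (Fin K) (Fin K) ℝ :=
      fun j i => if (j : ℕ) ≤ (i : ℕ) then c ((j : ℕ) + 1) / a ((i : ℕ) + 1) else 0 with hTdef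
    refine ⟨G, T, ?_, ?_, ?_⟩
    · -- feasibility of TᵀG
      intro i j hij
      have hij' : (i : ℕ) ≤ (j : ℕ) := hij
      have hiK : (i : ℕ) < K := i.isLt
      rw [Matrix.mul_apply]
      simp only [Matrix.transpose_apply]
      simp only [hTdef, hGdef]
      have hterm : ∀ k : Fin K,
          (if (k : ℕ) ≤ (i : ℕ) then c ((k : ℕ) + 1) / a ((i : ℕ) + 1) else 0) *
            (c ((k : ℕ) + 1) * DegradedSIC.gg a b S ((j : ℕ) + 1) ((k : ℕ) + 1))
          = if (k : ℕ) ≤ (i : ℕ) then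
              (a ((k : ℕ) + 1) ^ 2 - a ((k : ℕ) + 1 - 1) ^ 2) * (b ((j : ℕ) + 1) / a ((i : ℕ) + 1))
            else 0 := by
        intro k
        by_cases h : (k : ℕ) ≤ (i : ℕ)
        · rw [if_pos h, if_pos h, DegradedSIC.gg, if_pos (by omega),
            ← hc2 ((k : ℕ) + 1) (by omega) (by omega)]
          ring
        · rw [if_neg h, if_neg h, zero_mul]
      rw [Finset.sum_congr rfl fun k _ => hterm k,
        DegradedSIC.sum_fin_le (i : ℕ) hiK
          (fun r => (a (r + 1) ^ 2 - a (r + 1 - 1) ^ 2) * (b ((j : ℕ) + 1) / a ((i : ℕ) + 1))),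
        ← Finset.sum_mul, hsum (i : ℕ)]
      have hane : a ((i : ℕ) + 1) ≠ 0 := ne_of_gt (apos _ (by omega) (by omega))
      field_simp
    · -- column norms
      intro i
      have hiK : (i : ℕ) < K := i.isLt
      simp only [hTdef]
      have hterm : ∀ j : Fin K,
          (if (j : ℕ) ≤ (i : ℕ) then c ((j : ℕ) + 1) / a ((i : ℕ) + 1) else 0) *
            (if (j : ℕ) ≤ (i : ℕ) then c ((j : ℕ) + 1) / a ((i : ℕ) + 1) else 0)
          = if (j : ℕ) ≤ (i : ℕ) then
              (a ((j : ℕ) + 1) ^ 2 - a ((j : ℕ) + 1 - 1) ^ 2) / (a ((i : ℕ) + 1)) ^ 2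
            else 0 := by
        intro j
        by_cases h : (j : ℕ) ≤ (i : ℕ)
        · rw [if_pos h, if_pos h, ← hc2 ((j : ℕ) + 1) (by omega) (by omega)]
          ring
        · rw [if_neg h, if_neg h]
          ring
      rw [Finset.sum_congr rfl fun j _ => hterm j,
        DegradedSIC.sum_fin_le (i : ℕ) hiK
          (fun r => (a (r + 1) ^ 2 - a (r + 1 - 1) ^ 2) / (a ((i : ℕ) + 1)) ^ 2),
        ← Finset.sum_div, hsum (i : ℕ)]
      have hane : a ((i : ℕ) + 1) ≠ 0 := ne_of_gt (apos _ (by omega) (by omega))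
      rw [div_self (by positivity)]
    · -- determinant value
      have hMentry : ∀ p q : Fin K, (1 + G * Gᵀ) p q
          = (if p = q then (1 : ℝ) else 0)
            + c ((p : ℕ) + 1) * c ((q : ℕ) + 1)
              * DegradedSIC.RR K a b S ((p : ℕ) + 1) ((q : ℕ) + 1) := by
        intro p q
        rw [Matrix.add_apply, Matrix.one_apply, Matrix.mul_apply]
        congr 1
        simp only [Matrix.transpose_apply]
        simp only [hGdef]
        have hRval : DegradedSIC.RR K a b S ((p : ℕ) + 1) ((q : ℕ) + 1)
            = ∑ j : Fin K, DegradedSIC.gg a b S ((j : ℕ) + 1) ((p : ℕ) + 1)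
                * DegradedSIC.gg a b S ((j : ℕ) + 1) ((q : ℕ) + 1) := by
          rw [DegradedSIC.sum_fin_succ_eq_Icc
            (fun j => DegradedSIC.gg a b S j ((p : ℕ) + 1) * DegradedSIC.gg a b S j ((q : ℕ) + 1))]
          rfl
        rw [hRval, Finset.mul_sum]
        exact Finset.sum_congr rfl fun j _ => by ring
      set W : Matrix (Fin K) (Fin K) ℝ := fun m k =>
        (if m = k then (1 : ℝ) else 0)
          - (if (k : ℕ) < (m : ℕ) then
              c ((k : ℕ) + 1) * (c ((m : ℕ) + 1) * S ((m : ℕ) + 1) / DegradedSIC.vv a S ((m : ℕ) + 1))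
            else 0) with hWdef
      have hWtri : W.BlockTriangular OrderDual.toDual := by
        intro p q h
        have hpq : p < q := h
        simp only [hWdef]
        rw [if_neg (ne_of_lt hpq), if_neg (by
          have : (p : ℕ) < (q : ℕ) := hpq
          omega), sub_zero]
      have hWdet : W.det = 1 := by
        rw [Matrix.det_of_lowerTriangular W hWtri]
        have hd1 : ∀ p : Fin K, W p p = 1 := by
          intro p; simp [hWdef]
        rw [Finset.prod_congr rfl fun p _ => hd1 p, Finset.prod_const_one]
      have hTTs : ∀ t n : ℕ, ∑ r ∈ Finset.range t,
          (a (r + 1) ^ 2 - a (r + 1 - 1) ^ 2) * DegradedSIC.RR K a b S (r + 1) n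
          = DegradedSIC.TT K a b S (t + 1) n - 1 := by
        intro t n
        induction t with
        | zero => simp [DegradedSIC.TT]
        | succ t ih =>
          rw [Finset.sum_range_succ, ih]
          simp only [DegradedSIC.TT]
          rw [Finset.sum_Ico_succ_top (show 1 ≤ t + 1 by omega)]
          ring
      have hB : ∀ p q : Fin K, (W * (1 + G * Gᵀ)) p q
          = ((if p = q then (1 : ℝ) else 0)
              + c ((p : ℕ) + 1) * c ((q : ℕ) + 1)
                * DegradedSIC.RR K a b S ((p : ℕ) + 1) ((q : ℕ) + 1))
            - (c ((p : ℕ) + 1) * S ((p : ℕ) + 1) / DegradedSIC.vv a S ((p : ℕ) + 1))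
              * (∑ r ∈ Finset.range (p : ℕ),
                  c (r + 1) * ((if r = (q : ℕ) then (1 : ℝ) else 0)
                    + c (r + 1) * c ((q : ℕ) + 1) * DegradedSIC.RR K a b S (r + 1) ((q : ℕ) + 1))) := by
        intro p q
        rw [Matrix.mul_apply]
        simp only [hWdef, sub_mul, ite_mul, one_mul, zero_mul]
        rw [Finset.sum_sub_distrib]
        congr 1
        · rw [Finset.sum_ite_eq Finset.univ p (fun k => (1 + G * Gᵀ) k q), if_pos (Finset.mem_univ p)]
          exact hMentry p q
        · have hterm : ∀ k : Fin K,
              (if (k : ℕ) < (p : ℕ) then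
                c ((k : ℕ) + 1) * (c ((p : ℕ) + 1) * S ((p : ℕ) + 1) / DegradedSIC.vv a S ((p : ℕ) + 1))
                  * (1 + G * Gᵀ) k q
              else 0)
              = if (k : ℕ) < (p : ℕ) then
                  c ((k : ℕ) + 1) * (c ((p : ℕ) + 1) * S ((p : ℕ) + 1) / DegradedSIC.vv a S ((p : ℕ) + 1))
                    * ((if (k : ℕ) = (q : ℕ) then (1 : ℝ) else 0)
                      + c ((k : ℕ) + 1) * c ((q : ℕ) + 1)
                        * DegradedSIC.RR K a b S ((k : ℕ) + 1) ((q : ℕ) + 1))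
                else 0 := by
            intro k
            by_cases h : (k : ℕ) < (p : ℕ)
            · rw [if_pos h, if_pos h, hMentry k q]
              congr 2
              simp [Fin.ext_iff]
            · rw [if_neg h, if_neg h]
          rw [Finset.sum_congr rfl fun k _ => hterm k,
            DegradedSIC.sum_fin_lt (p : ℕ) (le_of_lt p.isLt)
              (fun r => c (r + 1) * (c ((p : ℕ) + 1) * S ((p : ℕ) + 1) / DegradedSIC.vv a S ((p : ℕ) + 1))
                * ((if r = (q : ℕ) then (1 : ℝ) else 0)
                  + c (r + 1) * c ((q : ℕ) + 1) * DegradedSIC.RR K a b S (r + 1) ((q : ℕ) + 1))),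
            Finset.mul_sum]
          exact Finset.sum_congr rfl fun r _ => by ring
      have hBzero : ∀ p q : Fin K, (q : ℕ) < (p : ℕ) → (W * (1 + G * Gᵀ)) p q = 0 := by
        intro p q hq
        rw [hB p q, if_neg (by
          intro h; rw [h] at hq; omega)]
        have hsplit : ∑ r ∈ Finset.range (p : ℕ),
            c (r + 1) * ((if r = (q : ℕ) then (1 : ℝ) else 0)
              + c (r + 1) * c ((q : ℕ) + 1) * DegradedSIC.RR K a b S (r + 1) ((q : ℕ) + 1))
            = c ((q : ℕ) + 1)
              + c ((q : ℕ) + 1) * (DegradedSIC.TT K a b S ((p : ℕ) + 1) ((q : ℕ) + 1) - 1) := by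
          have hre : ∀ r ∈ Finset.range (p : ℕ),
              c (r + 1) * ((if r = (q : ℕ) then (1 : ℝ) else 0)
                + c (r + 1) * c ((q : ℕ) + 1) * DegradedSIC.RR K a b S (r + 1) ((q : ℕ) + 1))
              = (if r = (q : ℕ) then c (r + 1) else 0)
                + c ((q : ℕ) + 1) * ((a (r + 1) ^ 2 - a (r + 1 - 1) ^ 2)
                    * DegradedSIC.RR K a b S (r + 1) ((q : ℕ) + 1)) := by
            intro r hr
            rw [Finset.mem_range] at hr
            rw [← hc2 (r + 1) (by omega) (by omega)]
            by_cases h : r = (q : ℕ)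
            · rw [if_pos h, if_pos h]; ring
            · rw [if_neg h, if_neg h]; ring
          rw [Finset.sum_congr rfl hre, Finset.sum_add_distrib, ← Finset.mul_sum, hTTs,
            Finset.sum_ite_eq' (Finset.range (p : ℕ)) (q : ℕ) (fun r => c (r + 1)),
            if_pos (Finset.mem_range.mpr hq)]
        rw [hsplit]
        have hstar := DegradedSIC.star (K := K) (a := a) (b := b) (S := S) ha0 hS hSnn
          ((p : ℕ) + 1) ((q : ℕ) + 1) (by omega) (by omega) (by have := p.isLt; omega)
        have hne := hvne ((p : ℕ) + 1)
        field_simp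
        linear_combination c ((p : ℕ) + 1) * c ((q : ℕ) + 1) * hstar
      have hBdiag : ∀ p : Fin K, (W * (1 + G * Gᵀ)) p p = DegradedSIC.dd a S ((p : ℕ) + 1) := by
        intro p
        rw [hB p p, if_pos rfl]
        have hsplit : ∑ r ∈ Finset.range (p : ℕ),
            c (r + 1) * ((if r = (p : ℕ) then (1 : ℝ) else 0)
              + c (r + 1) * c ((p : ℕ) + 1) * DegradedSIC.RR K a b S (r + 1) ((p : ℕ) + 1))
            = c ((p : ℕ) + 1) * (DegradedSIC.TT K a b S ((p : ℕ) + 1) ((p : ℕ) + 1) - 1) := by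
          have hre : ∀ r ∈ Finset.range (p : ℕ),
              c (r + 1) * ((if r = (p : ℕ) then (1 : ℝ) else 0)
                + c (r + 1) * c ((p : ℕ) + 1) * DegradedSIC.RR K a b S (r + 1) ((p : ℕ) + 1))
              = (if r = (p : ℕ) then c (r + 1) else 0)
                + c ((p : ℕ) + 1) * ((a (r + 1) ^ 2 - a (r + 1 - 1) ^ 2)
                    * DegradedSIC.RR K a b S (r + 1) ((p : ℕ) + 1)) := by
            intro r hr
            rw [Finset.mem_range] at hr
            rw [← hc2 (r + 1) (by omega) (by omega)]
            by_cases h : r = (p : ℕ)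
            · rw [if_pos h, if_pos h]; ring
            · rw [if_neg h, if_neg h]; ring
          rw [Finset.sum_congr rfl hre, Finset.sum_add_distrib, ← Finset.mul_sum, hTTs,
            Finset.sum_ite_eq' (Finset.range (p : ℕ)) (p : ℕ) (fun r => c (r + 1)),
            if_neg (by simp)]
          ring
        rw [hsplit]
        have hstar := DegradedSIC.star (K := K) (a := a) (b := b) (S := S) ha0 hS hSnn
          ((p : ℕ) + 1) ((p : ℕ) + 1) (by omega) (by omega) (by have := p.isLt; omega)
        have hne := hvne ((p : ℕ) + 1)
        have hcp2 : c ((p : ℕ) + 1) ^ 2 = a ((p : ℕ) + 1) ^ 2 - a ((p : ℕ) + 1 - 1) ^ 2 :=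
          hc2 ((p : ℕ) + 1) (by omega) (by have := p.isLt; omega)
        have huv : DegradedSIC.uu a S ((p : ℕ) + 1)
            = DegradedSIC.vv a S ((p : ℕ) + 1)
              + (a ((p : ℕ) + 1) ^ 2 - a ((p : ℕ) + 1 - 1) ^ 2) * S ((p : ℕ) + 1) := by
          rw [DegradedSIC.uu, DegradedSIC.vv]; ring
        rw [DegradedSIC.dd]
        field_simp
        linear_combination c ((p : ℕ) + 1) ^ 2 * hstar + S ((p : ℕ) + 1) * hcp2 - huv
      have hBtri : (W * (1 + G * Gᵀ)).BlockTriangular id := by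
        intro p q h
        exact hBzero p q h
      have hdet : (1 + G * Gᵀ).det = ∏ p : Fin K, DegradedSIC.dd a S ((p : ℕ) + 1) := by
        have h2 : ∏ p : Fin K, (W * (1 + G * Gᵀ)) p p = W.det * (1 + G * Gᵀ).det := by
          rw [← Matrix.det_mul, Matrix.det_of_upperTriangular hBtri]
        rw [hWdet, one_mul] at h2
        rw [← h2]
        exact Finset.prod_congr rfl fun p _ => hBdiag p
      rw [hdet]
      congr 1
      rw [Real.log_prod (fun p _ => ne_of_gt (DegradedSIC.dd_pos hSnn _)),
        ← DegradedSIC.sum_fin_succ_eq_Icc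
          (fun i => Real.log (1 + (a i ^ 2 - a (i - 1) ^ 2) * S i / (a (i - 1) ^ 2 * S i + 1)))]
      apply Finset.sum_congr rfl
      intro p _
      congr 1
      simp only [Nat.add_sub_cancel]
      have hne := hvne ((p : ℕ) + 1)
      have hfold : a (p : ℕ) ^ 2 * S ((p : ℕ) + 1) + 1
          = DegradedSIC.vv a S ((p : ℕ) + 1) := rfl
      rw [hfold, DegradedSIC.dd]
      have huv : DegradedSIC.uu a S ((p : ℕ) + 1)
          = DegradedSIC.vv a S ((p : ℕ) + 1)
            + (a ((p : ℕ) + 1) ^ 2 - a (p : ℕ) ^ 2) * S ((p : ℕ) + 1) := by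
        rw [DegradedSIC.uu, DegradedSIC.vv]
        simp only [Nat.add_sub_cancel]
        ring
      field_simp
      linear_combination huv
  refine ⟨main, ?_⟩
  obtain ⟨G, T, h1, h2, h3⟩ := main
  by_cases hbdd : BddBelow {x : ℝ | ∃ G T : Matrix (Fin K) (Fin K) ℝ,
      (∀ i j : Fin K, i ≤ j → (Tᵀ * G) i j = a (i.val + 1) * b (j.val + 1)) ∧
      (∀ i : Fin K, (∑ j : Fin K, T j i * T j i) ≤ 1) ∧
      x = (1 / 2 : ℝ) * Real.log ((1 + G * Gᵀ).det)}
  · exact csInf_le hbdd ⟨G, T, h1, h2, h3.symm⟩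
  · rw [Real.sInf_of_not_bddBelow hbdd]
    apply mul_nonneg (by norm_num)
    apply Finset.sum_nonneg
    intro i hi
    rw [Finset.mem_Icc] at hi
    apply Real.log_nonneg
    have h0 : 0 ≤ (a i ^ 2 - a (i - 1) ^ 2) * S i / (a (i - 1) ^ 2 * S i + 1) := by
      apply div_nonneg (mul_nonneg (enn i hi.1 hi.2) (hSnn i))
      have := hSnn i; positivity
    linarith
end
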